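/- arXiv:1606.03186 — 8 statements merged into one kernel-verified Lean document; each statement's English description precedes it below -/
import Mathlib

section
/- The series 1 + 1/3 − 1/5 − 1/7 + 1/9 + 1/11 − 1/13 − 1/15 + ⋯, with signs in the pattern (+,+,−,−) repeating on consecutive odd reciprocals, converges and equals π√2/4. -/
open Real

lemma denom_pos (x : ℝ) : 0 < 1 + x^4 := by positivity

lemma contInt : Continuous (fun x : ℝ => (1 + x^2)/(1 + x^4)) := by
  apply Continuous.div (by continuity) (by continuity)
  intro x; positivity

lemma hasDerivF (x : ℝ) :
    HasDerivAt (fun x : ℝ => Real.sqrt 2 / 2 * (arctan (Real.sqrt 2 * x + 1) + arctan (Real.sqrt 2 * x - 1)))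
      ((1 + x^2)/(1 + x^4)) x := by
  have h1 : HasDerivAt (fun x : ℝ => arctan (Real.sqrt 2 * x + 1))
      (1 / (1 + (Real.sqrt 2 * x + 1)^2) * Real.sqrt 2) x := by
    have := (Real.hasDerivAt_arctan (Real.sqrt 2 * x + 1)).comp x
      (((hasDerivAt_id x).const_mul (Real.sqrt 2)).add_const 1)
    simpa [mul_one, Function.comp_def] using this
  have h2 : HasDerivAt (fun x : ℝ => arctan (Real.sqrt 2 * x - 1))
      (1 / (1 + (Real.sqrt 2 * x - 1)^2) * Real.sqrt 2) x := by
    have := (Real.hasDerivAt_arctan (Real.sqrt 2 * x - 1)).comp x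
      (((hasDerivAt_id x).const_mul (Real.sqrt 2)).sub_const 1)
    simpa [mul_one, Function.comp_def] using this
  have h := ((h1.add h2).const_mul (Real.sqrt 2 / 2))
  refine h.congr_deriv ?_
  have hs : Real.sqrt 2 ^ 2 = 2 := Real.sq_sqrt (by norm_num)
  have d1 : (0:ℝ) < 1 + (Real.sqrt 2 * x + 1)^2 := by positivity
  have d2 : (0:ℝ) < 1 + (Real.sqrt 2 * x - 1)^2 := by positivity
  have d3 : (0:ℝ) < 1 + x^4 := by positivity
  field_simp
  linear_combination (4 + 2*x^2*(Real.sqrt 2^2+2) - 2*Real.sqrt 2^2*x^4) * hs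

lemma integralA : ∫ x in (0:ℝ)..1, (1 + x^2)/(1 + x^4) = π * Real.sqrt 2 / 4 := by
  rw [intervalIntegral.integral_eq_sub_of_hasDerivAt (fun x _ => hasDerivF x)
    (contInt.intervalIntegrable 0 1)]
  have hss : Real.sqrt 2 * Real.sqrt 2 = 2 := Real.mul_self_sqrt (by norm_num)
  have hinv : ((Real.sqrt 2 + 1 : ℝ))⁻¹ = Real.sqrt 2 - 1 :=
    inv_eq_of_mul_eq_one_right (by linear_combination hss)
  have h := Real.arctan_inv_of_pos (show (0:ℝ) < Real.sqrt 2 + 1 by positivity)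
  rw [hinv] at h
  have hs : Real.sqrt 2 * Real.sqrt 2 = 2 := Real.mul_self_sqrt (by norm_num)
  simp only [mul_one, mul_zero, zero_add, zero_sub]
  rw [h, Real.arctan_neg, Real.arctan_one]
  ring

lemma termInt (m : ℕ) :
    1 / (8 * (m : ℝ) + 1) + 1 / (8 * (m : ℝ) + 3) - 1 / (8 * (m : ℝ) + 5) - 1 / (8 * (m : ℝ) + 7)
      = ∫ x in (0:ℝ)..1, (x^(8*m) + x^(8*m+2) - x^(8*m+4) - x^(8*m+6)) := by
  have e : ∀ n : ℕ, ∫ x in (0:ℝ)..1, x^n = 1/((n:ℝ)+1) := by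
    intro n; rw [integral_pow]; norm_num
  have i1 : IntervalIntegrable (fun x:ℝ => x^(8*m)) MeasureTheory.volume 0 1 :=
    (continuous_pow _).intervalIntegrable 0 1
  have i2 : IntervalIntegrable (fun x:ℝ => x^(8*m+2)) MeasureTheory.volume 0 1 :=
    (continuous_pow _).intervalIntegrable 0 1
  have i3 : IntervalIntegrable (fun x:ℝ => x^(8*m+4)) MeasureTheory.volume 0 1 :=
    (continuous_pow _).intervalIntegrable 0 1
  have i4 : IntervalIntegrable (fun x:ℝ => x^(8*m+6)) MeasureTheory.volume 0 1 :=
    (continuous_pow _).intervalIntegrable 0 1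
  rw [intervalIntegral.integral_sub ((i1.add i2).sub i3) i4,
    intervalIntegral.integral_sub (i1.add i2) i3,
    intervalIntegral.integral_add i1 i2, e, e, e, e]
  push_cast; ring

lemma pointwise (N : ℕ) (x : ℝ) :
    (∑ m ∈ Finset.range N, (x^(8*m) + x^(8*m+2) - x^(8*m+4) - x^(8*m+6)))
      = (1 - x^(8*N)) * (1 + x^2) / (1 + x^4) := by
  have hd : (1:ℝ) + x^4 ≠ 0 := by positivity
  have hterm : ∀ m : ℕ, x^(8*m) + x^(8*m+2) - x^(8*m+4) - x^(8*m+6)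
      = (x^8)^m * (1 + x^2 - x^4 - x^6) := by
    intro m; rw [pow_add, pow_add, pow_add, pow_mul]; ring
  simp_rw [hterm, ← Finset.sum_mul]
  have key := geom_sum_mul (x^8) N
  rw [eq_div_iff hd, pow_mul]
  linear_combination (-(1+x^2)) * key

lemma partialSum (N : ℕ) :
    (∑ m ∈ Finset.range N,
      (1 / (8 * (m : ℝ) + 1) + 1 / (8 * (m : ℝ) + 3) - 1 / (8 * (m : ℝ) + 5) - 1 / (8 * (m : ℝ) + 7)))
      = ∫ x in (0:ℝ)..1, (1 - x^(8*N)) * (1 + x^2) / (1 + x^4) := by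
  simp_rw [termInt, ← pointwise N]
  rw [intervalIntegral.integral_finset_sum]
  intro i _
  apply Continuous.intervalIntegrable
  continuity


lemma remainder_bound (N : ℕ) :
    |(∫ x in (0:ℝ)..1, (1 - x^(8*N)) * (1 + x^2) / (1 + x^4)) -
      ∫ x in (0:ℝ)..1, (1 + x^2)/(1 + x^4)| ≤ 2/(8*(N:ℝ)+1) := by
  have hcN : Continuous (fun x : ℝ => (1 - x^(8*N)) * (1 + x^2) / (1 + x^4)) := by
    apply Continuous.div (by continuity) (by continuity)
    intro x; positivity
  have hR : Continuous (fun x : ℝ => x^(8*N) * ((1 + x^2)/(1 + x^4))) := by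
    exact (continuous_pow _).mul contInt
  rw [← intervalIntegral.integral_sub (hcN.intervalIntegrable 0 1) (contInt.intervalIntegrable 0 1)]
  have hpt : ∀ x : ℝ, (1 - x^(8*N)) * (1 + x^2) / (1 + x^4) - (1 + x^2)/(1 + x^4)
      = -(x^(8*N) * ((1 + x^2)/(1 + x^4))) := by
    intro x
    have hd : (1:ℝ) + x^4 ≠ 0 := by positivity
    field_simp; ring
  simp_rw [hpt, intervalIntegral.integral_neg, abs_neg]
  have hnn : 0 ≤ ∫ x in (0:ℝ)..1, x^(8*N) * ((1 + x^2)/(1 + x^4)) := by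
    apply intervalIntegral.integral_nonneg (by norm_num)
    intro x hx
    have h1 : (0:ℝ) ≤ x := hx.1
    positivity
  rw [abs_of_nonneg hnn]
  have hle : (∫ x in (0:ℝ)..1, x^(8*N) * ((1 + x^2)/(1 + x^4)))
      ≤ ∫ x in (0:ℝ)..1, 2 * x^(8*N) := by
    apply intervalIntegral.integral_mono_on (by norm_num) (hR.intervalIntegrable 0 1)
      ((continuous_const.mul (continuous_pow _)).intervalIntegrable 0 1)
    intro x hx
    have h0 : (0:ℝ) ≤ x := hx.1
    have h1 : x ≤ 1 := hx.2
    have hx2 : x^2 ≤ 1 := pow_le_one₀ h0 h1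
    have hd : (0:ℝ) < 1 + x^4 := by positivity
    have : (1 + x^2)/(1 + x^4) ≤ 2 := by
      rw [div_le_iff₀ hd]; nlinarith [pow_nonneg h0 4]
    calc x^(8*N) * ((1 + x^2)/(1 + x^4)) ≤ x^(8*N) * 2 := by
          apply mul_le_mul_of_nonneg_left this (pow_nonneg h0 _)
      _ = 2 * x^(8*N) := by ring
  calc (∫ x in (0:ℝ)..1, x^(8*N) * ((1 + x^2)/(1 + x^4))) ≤ ∫ x in (0:ℝ)..1, 2 * x^(8*N) := hle
    _ = 2/(8*(N:ℝ)+1) := by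
        rw [intervalIntegral.integral_const_mul, integral_pow]
        push_cast; ring

lemma bound_tendsto : Filter.Tendsto (fun N : ℕ => 2/(8*(N:ℝ)+1)) Filter.atTop (nhds 0) := by
  apply Filter.Tendsto.div_atTop (tendsto_const_nhds)
  apply Filter.tendsto_atTop_add_const_right
  exact (tendsto_natCast_atTop_atTop (R := ℝ)).const_mul_atTop (by norm_num)

lemma term_nonneg (m : ℕ) :
    0 ≤ 1 / (8 * (m : ℝ) + 1) + 1 / (8 * (m : ℝ) + 3) - 1 / (8 * (m : ℝ) + 5) - 1 / (8 * (m : ℝ) + 7) := by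
  have h1 : 1 / (8 * (m : ℝ) + 5) ≤ 1 / (8 * (m : ℝ) + 1) := by
    apply one_div_le_one_div_of_le (by positivity); linarith
  have h2 : 1 / (8 * (m : ℝ) + 7) ≤ 1 / (8 * (m : ℝ) + 3) := by
    apply one_div_le_one_div_of_le (by positivity); linarith
  linarith

theorem stmt7 :
    HasSum (fun m : ℕ =>
        1 / (8 * (m : ℝ) + 1) + 1 / (8 * (m : ℝ) + 3)
          - 1 / (8 * (m : ℝ) + 5) - 1 / (8 * (m : ℝ) + 7))
      (π * Real.sqrt 2 / 4) := by
  rw [hasSum_iff_tendsto_nat_of_nonneg term_nonneg]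
  simp_rw [partialSum]
  have h0 : Filter.Tendsto
      (fun N : ℕ => (∫ x in (0:ℝ)..1, (1 - x^(8*N)) * (1 + x^2) / (1 + x^4)) -
        ∫ x in (0:ℝ)..1, (1 + x^2)/(1 + x^4)) Filter.atTop (nhds 0) :=
    squeeze_zero_norm (fun n => remainder_bound n) bound_tendsto
  have h1 := h0.add_const (∫ x in (0:ℝ)..1, (1 + x^2)/(1 + x^4))
  simp only [zero_add, sub_add_cancel] at h1
  rwa [integralA] at h1
end

section
/- The series 1/1³ + 1/3³ − 1/5³ − 1/7³ + 1/9³ + 1/11³ − 1/13³ − 1/15³ + ⋯, with sign pattern (+,+,−,−) repeating on reciprocals of cubes of odd numbers, converges and equals 3π³√2/128. -/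
open Real

lemma bern3_eval_eighth :
    (Polynomial.map (algebraMap ℚ ℝ) (Polynomial.bernoulli 3)).eval (1/8 : ℝ) = 21 / 512 := by
  have : (1 / 8 : ℝ) = (algebraMap ℚ ℝ) (1 / 8 : ℚ) := by norm_num
  rw [this, Polynomial.eval_map, Polynomial.eval₂_at_apply]
  have : (Polynomial.bernoulli 3).eval ((1:ℚ)/8) = 21 / 512 := by
    simp_rw [Polynomial.bernoulli, Finset.sum_range_succ, Polynomial.eval_add,
      Polynomial.eval_monomial]
    rw [Finset.sum_range_zero, Polynomial.eval_zero, zero_add, bernoulli_one,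
      bernoulli_eq_bernoulli'_of_ne_one zero_ne_one, bernoulli'_zero,
      bernoulli_eq_bernoulli'_of_ne_one (by decide : 2 ≠ 1), bernoulli'_two,
      bernoulli_eq_bernoulli'_of_ne_one (by decide : 3 ≠ 1), bernoulli'_three]
    norm_num
  rw [this]; norm_num

noncomputable def Fq (n : ℕ) : ℝ := 1 / (n : ℝ) ^ 3 * Real.sin (π * n / 4)

lemma full_sum : HasSum Fq (7 * π ^ 3 / 256) := by
  have h := hasSum_one_div_nat_pow_mul_sin (k := 1) one_ne_zero
    (x := 1/8) (by constructor <;> norm_num)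
  rw [(by norm_num : 2 * 1 + 1 = 3)] at h
  rw [bern3_eval_eighth] at h
  refine (congr_arg₂ HasSum ?_ ?_).to_iff.mpr h
  · funext n; unfold Fq; congr 1; ring
  · norm_num [Nat.factorial]; ring

lemma even_sum : HasSum (fun k : ℕ => Fq (2 * k)) (π ^ 3 / 256) := by
  have h := (hasSum_L_function_mod_four_eval_three).mul_left (1/8 : ℝ)
  refine (congr_arg₂ HasSum ?_ ?_).to_iff.mpr h
  · funext k
    unfold Fq
    push_cast
    rcases eq_or_ne (k:ℝ) 0 with hk | hk
    · simp [hk]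
    · field_simp
      ring
  · ring

lemma odd_sum : HasSum (fun k : ℕ => Fq (2 * k + 1)) (3 * π ^ 3 / 128) := by
  have hfull := full_sum
  have heven := even_sum
  have hinj : Function.Injective (fun k : ℕ => 2 * k + 1) := by
    intro a b h
    dsimp at h
    omega
  obtain ⟨O, hO⟩ := hfull.summable.comp_injective hinj
  have h2 := heven.even_add_odd hO
  have : π ^ 3 / 256 + O = 7 * π ^ 3 / 256 := h2.unique hfull
  have hOval : O = 3 * π ^ 3 / 128 := by linarith
  rwa [hOval] at hO

theorem stmt9 :
    HasSum (fun m : ℕ =>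
        1 / (8 * (m : ℝ) + 1) ^ 3 + 1 / (8 * (m : ℝ) + 3) ^ 3
          - 1 / (8 * (m : ℝ) + 5) ^ 3 - 1 / (8 * (m : ℝ) + 7) ^ 3)
      (3 * π ^ 3 * Real.sqrt 2 / 128) := by
  have hO := (odd_sum).mul_left (Real.sqrt 2)
  -- regroup into blocks of 4
  set h : ℕ → ℝ := fun k => Real.sqrt 2 * Fq (2 * k + 1) with hh
  have hOh : HasSum h (Real.sqrt 2 * (3 * π ^ 3 / 128)) := hO
  have he : HasSum (fun p : ℕ × Fin 4 => h ((Nat.divModEquiv 4).symm p))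
      (Real.sqrt 2 * (3 * π ^ 3 / 128)) :=
    ((Nat.divModEquiv 4).symm.hasSum_iff).mpr hOh
  have hfib : HasSum (fun m : ℕ => ∑ j : Fin 4, h (m * 4 + (j : ℕ)))
      (Real.sqrt 2 * (3 * π ^ 3 / 128)) := by
    refine he.prod_fiberwise (fun m => ?_)
    exact hasSum_fintype _
  have hsin : ∀ m : ℕ, ∀ c : ℝ, Real.sin (π / 4 * c + m * (2 * π)) = Real.sin (π / 4 * c) :=
    fun m c => Real.sin_add_nat_mul_two_pi _ m
  refine (congr_arg₂ HasSum ?_ ?_).to_iff.mpr hfib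
  · funext m
    rw [Fin.sum_univ_four]
    simp only [hh, Fq]
    have e1 : ((2 * (m * 4 + (0:ℕ)) + 1 : ℕ) : ℝ) = 8 * m + 1 := by push_cast; ring
    have e2 : ((2 * (m * 4 + (1:ℕ)) + 1 : ℕ) : ℝ) = 8 * m + 3 := by push_cast; ring
    have e3 : ((2 * (m * 4 + (2:ℕ)) + 1 : ℕ) : ℝ) = 8 * m + 5 := by push_cast; ring
    have e4 : ((2 * (m * 4 + (3:ℕ)) + 1 : ℕ) : ℝ) = 8 * m + 7 := by push_cast; ring
    rw [show ((0 : Fin 4) : ℕ) = 0 from rfl, show ((1 : Fin 4) : ℕ) = 1 from rfl,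
      show ((2 : Fin 4) : ℕ) = 2 from rfl, show ((3 : Fin 4) : ℕ) = 3 from rfl]
    rw [e1, e2, e3, e4]
    have s1 : Real.sin (π * (8 * m + 1) / 4) = Real.sqrt 2 / 2 := by
      rw [show π * (8 * (m:ℝ) + 1) / 4 = π / 4 + m * (2 * π) by ring,
        Real.sin_add_nat_mul_two_pi, Real.sin_pi_div_four]
    have s2 : Real.sin (π * (8 * m + 3) / 4) = Real.sqrt 2 / 2 := by
      rw [show π * (8 * (m:ℝ) + 3) / 4 = (π - π / 4) + m * (2 * π) by ring,
        Real.sin_add_nat_mul_two_pi, Real.sin_pi_sub, Real.sin_pi_div_four]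
    have s3 : Real.sin (π * (8 * m + 5) / 4) = -(Real.sqrt 2 / 2) := by
      rw [show π * (8 * (m:ℝ) + 5) / 4 = (π / 4 + π) + m * (2 * π) by ring,
        Real.sin_add_nat_mul_two_pi, Real.sin_add_pi, Real.sin_pi_div_four]
    have s4 : Real.sin (π * (8 * m + 7) / 4) = -(Real.sqrt 2 / 2) := by
      rw [show π * (8 * (m:ℝ) + 7) / 4 = ((π - π / 4) + π) + m * (2 * π) by ring,
        Real.sin_add_nat_mul_two_pi, Real.sin_add_pi, Real.sin_pi_sub, Real.sin_pi_div_four]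
    rw [s1, s2, s3, s4]
    have h2 : Real.sqrt 2 * Real.sqrt 2 = 2 := Real.mul_self_sqrt (by norm_num)
    linear_combination (-(1/(8*(m:ℝ)+1)^3 + 1/(8*(m:ℝ)+3)^3 - 1/(8*(m:ℝ)+5)^3
      - 1/(8*(m:ℝ)+7)^3)/2) * h2
  · ring
end

section
/- The series 1/1⁵ + 1/3⁵ − 1/5⁵ − 1/7⁵ + 1/9⁵ + 1/11⁵ − 1/13⁵ − 1/15⁵ + ⋯, with sign pattern (+,+,−,−) on reciprocals of fifth powers of odd numbers, converges and equals 57√2·π⁵/24576. -/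
open Real

lemma bernoulli_five (q : ℚ) :
    (Polynomial.bernoulli 5).eval q = q ^ 5 - 5 / 2 * q ^ 4 + 5 / 3 * q ^ 3 - 1 / 6 * q := by
  have b3 : _root_.bernoulli 3 = 0 := by
    rw [bernoulli_eq_bernoulli'_of_ne_one (by norm_num),
      bernoulli'_eq_zero_of_odd (by decide) (by norm_num)]
  have b5 : _root_.bernoulli 5 = 0 := by
    rw [bernoulli_eq_bernoulli'_of_ne_one (by norm_num),
      bernoulli'_eq_zero_of_odd (by decide) (by norm_num)]
  have b4 : _root_.bernoulli 4 = -1 / 30 := by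
    rw [bernoulli_eq_bernoulli'_of_ne_one (by norm_num), bernoulli'_four]
  have b2 : _root_.bernoulli 2 = 1 / 6 := by
    rw [bernoulli_eq_bernoulli'_of_ne_one (by norm_num), bernoulli'_two]
  have b0 : _root_.bernoulli 0 = 1 := bernoulli_zero
  simp_rw [Polynomial.bernoulli, Finset.sum_range_succ, Polynomial.eval_add,
    Polynomial.eval_monomial, Finset.sum_range_zero, Polynomial.eval_zero, zero_add,
    bernoulli_one, b0, b2, b3, b4, b5]
  norm_num [Nat.choose]
  ring

lemma sin_vals :
    Real.sin (π / 4) = Real.sqrt 2 / 2 ∧ Real.sin (π / 2) = 1 ∧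
    Real.sin (3 * π / 4) = Real.sqrt 2 / 2 ∧ Real.sin π = 0 ∧
    Real.sin (5 * π / 4) = -(Real.sqrt 2 / 2) ∧ Real.sin (3 * π / 2) = -1 ∧
    Real.sin (7 * π / 4) = -(Real.sqrt 2 / 2) := by
  have h1 : Real.sin (3 * π / 4) = Real.sqrt 2 / 2 := by
    rw [show (3 * π / 4 : ℝ) = π - π / 4 by ring, Real.sin_pi_sub, Real.sin_pi_div_four]
  have h2 : Real.sin (5 * π / 4) = -(Real.sqrt 2 / 2) := by
    rw [show (5 * π / 4 : ℝ) = π / 4 + π by ring, Real.sin_add_pi, Real.sin_pi_div_four]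
  have h3 : Real.sin (3 * π / 2) = -1 := by
    rw [show (3 * π / 2 : ℝ) = π / 2 + π by ring, Real.sin_add_pi, Real.sin_pi_div_two]
  have h4 : Real.sin (7 * π / 4) = -(Real.sqrt 2 / 2) := by
    rw [show (7 * π / 4 : ℝ) = 3 * π / 4 + π by ring, Real.sin_add_pi, h1]
  exact ⟨Real.sin_pi_div_four, Real.sin_pi_div_two, h1, Real.sin_pi, h2, h3, h4⟩

theorem stmt10 :
    HasSum (fun m : ℕ =>
        1 / (8 * (m : ℝ) + 1) ^ 5 + 1 / (8 * (m : ℝ) + 3) ^ 5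
          - 1 / (8 * (m : ℝ) + 5) ^ 5 - 1 / (8 * (m : ℝ) + 7) ^ 5)
      (57 * Real.sqrt 2 * π ^ 5 / 24576) := by
  obtain ⟨s1, s2, s3, s4, s5, s6, s7⟩ := sin_vals
  have h2 : (0 : ℝ) < Real.sqrt 2 := by positivity
  have hsq : Real.sqrt 2 * Real.sqrt 2 = 2 :=
    Real.mul_self_sqrt (by norm_num)
  -- the two sine series
  have hx1 : (1 / 8 : ℝ) ∈ Set.Icc (0 : ℝ) 1 := by constructor <;> norm_num
  have hx3 : (3 / 8 : ℝ) ∈ Set.Icc (0 : ℝ) 1 := by constructor <;> norm_num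
  have h1 := hasSum_one_div_nat_pow_mul_sin (k := 2) two_ne_zero hx1
  have h3 := hasSum_one_div_nat_pow_mul_sin (k := 2) two_ne_zero hx3
  -- evaluate the Bernoulli constants
  have e1 : (Polynomial.map (algebraMap ℚ ℝ) (Polynomial.bernoulli (2 * 2 + 1))).eval (1/8 : ℝ)
      = (algebraMap ℚ ℝ) ((Polynomial.bernoulli 5).eval (1/8 : ℚ)) := by
    rw [(by norm_num : (2 * 2 + 1 : ℕ) = 5), Polynomial.eval_map,
      show (1/8 : ℝ) = (algebraMap ℚ ℝ) (1/8 : ℚ) by rw [eq_ratCast]; norm_num, Polynomial.eval₂_at_apply]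
  have e3 : (Polynomial.map (algebraMap ℚ ℝ) (Polynomial.bernoulli (2 * 2 + 1))).eval (3/8 : ℝ)
      = (algebraMap ℚ ℝ) ((Polynomial.bernoulli 5).eval (3/8 : ℚ)) := by
    rw [(by norm_num : (2 * 2 + 1 : ℕ) = 5), Polynomial.eval_map,
      show (3/8 : ℝ) = (algebraMap ℚ ℝ) (3/8 : ℚ) by rw [eq_ratCast]; norm_num, Polynomial.eval₂_at_apply]
  have hb1 : (Polynomial.bernoulli 5).eval (1/8 : ℚ) = -595 / 32768 := by
    rw [bernoulli_five]; norm_num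
  have hb3 : (Polynomial.bernoulli 5).eval (3/8 : ℚ) = -545 / 32768 := by
    rw [bernoulli_five]; norm_num
  have hadd := h1.add h3
  -- value of the combined sum
  have hval : ((-1 : ℝ) ^ (2 + 1) * (2 * π) ^ (2 * 2 + 1) / 2 / (((2 * 2 + 1).factorial : ℕ) : ℝ) *
        (Polynomial.map (algebraMap ℚ ℝ) (Polynomial.bernoulli (2 * 2 + 1))).eval (1/8 : ℝ)) +
      ((-1 : ℝ) ^ (2 + 1) * (2 * π) ^ (2 * 2 + 1) / 2 / (((2 * 2 + 1).factorial : ℕ) : ℝ) *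
        (Polynomial.map (algebraMap ℚ ℝ) (Polynomial.bernoulli (2 * 2 + 1))).eval (3/8 : ℝ))
      = Real.sqrt 2 * (57 * Real.sqrt 2 * π ^ 5 / 24576) := by
    rw [e1, e3, hb1, hb3]
    have g1 : ((algebraMap ℚ ℝ) (-595 / 32768 : ℚ)) = (-595 / 32768 : ℝ) := by
      rw [eq_ratCast]; norm_num
    have g3 : ((algebraMap ℚ ℝ) (-545 / 32768 : ℚ)) = (-545 / 32768 : ℝ) := by
      rw [eq_ratCast]; norm_num
    rw [g1, g3, show ((Nat.factorial (2 * 2 + 1) : ℕ) : ℝ) = 120 by norm_num [Nat.factorial]]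
    have : Real.sqrt 2 * (57 * Real.sqrt 2 * π ^ 5 / 24576)
        = 57 * (Real.sqrt 2 * Real.sqrt 2) * π ^ 5 / 24576 := by ring
    rw [this, hsq]
    ring
  rw [hval] at hadd
  -- regroup the sum along residues mod 8
  set F : ℕ → ℝ := fun n =>
    1 / (n : ℝ) ^ (2 * 2 + 1) * Real.sin (2 * π * n * (1/8)) +
    1 / (n : ℝ) ^ (2 * 2 + 1) * Real.sin (2 * π * n * (3/8)) with hF
  have hprod : HasSum (fun p : ℕ × Fin 8 => F (p.1 * 8 + (p.2 : ℕ)))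
      (Real.sqrt 2 * (57 * Real.sqrt 2 * π ^ 5 / 24576)) := by
    have := (Equiv.hasSum_iff (Nat.divModEquiv 8).symm (f := F)).mpr hadd
    convert this using 1
    rfl
  have key : ∀ m : ℕ, HasSum (fun j : Fin 8 => F (m * 8 + (j : ℕ)))
      (Real.sqrt 2 * (1 / (8 * (m : ℝ) + 1) ^ 5 + 1 / (8 * (m : ℝ) + 3) ^ 5
          - 1 / (8 * (m : ℝ) + 5) ^ 5 - 1 / (8 * (m : ℝ) + 7) ^ 5)) := by
    intro m
    have : ∑ j : Fin 8, F (m * 8 + (j : ℕ))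
        = Real.sqrt 2 * (1 / (8 * (m : ℝ) + 1) ^ 5 + 1 / (8 * (m : ℝ) + 3) ^ 5
          - 1 / (8 * (m : ℝ) + 5) ^ 5 - 1 / (8 * (m : ℝ) + 7) ^ 5) := by
      rw [Fin.sum_univ_eight]
      simp only [hF, show ((0:Fin 8):ℕ) = 0 from rfl, show ((1:Fin 8):ℕ) = 1 from rfl,
        show ((2:Fin 8):ℕ) = 2 from rfl, show ((3:Fin 8):ℕ) = 3 from rfl,
        show ((4:Fin 8):ℕ) = 4 from rfl, show ((5:Fin 8):ℕ) = 5 from rfl,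
        show ((6:Fin 8):ℕ) = 6 from rfl, show ((7:Fin 8):ℕ) = 7 from rfl, Nat.add_zero]
      have c0 : ((m * 8 : ℕ) : ℝ) = 8 * m := by push_cast; ring
      have c1 : ((m * 8 + 1 : ℕ) : ℝ) = 8 * m + 1 := by push_cast; ring
      have c2 : ((m * 8 + 2 : ℕ) : ℝ) = 8 * m + 2 := by push_cast; ring
      have c3 : ((m * 8 + 3 : ℕ) : ℝ) = 8 * m + 3 := by push_cast; ring
      have c4 : ((m * 8 + 4 : ℕ) : ℝ) = 8 * m + 4 := by push_cast; ring
      have c5 : ((m * 8 + 5 : ℕ) : ℝ) = 8 * m + 5 := by push_cast; ring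
      have c6 : ((m * 8 + 6 : ℕ) : ℝ) = 8 * m + 6 := by push_cast; ring
      have c7 : ((m * 8 + 7 : ℕ) : ℝ) = 8 * m + 7 := by push_cast; ring
      rw [c0, c1, c2, c3, c4, c5, c6, c7]
      -- reduce all the sine arguments
      have t10 : Real.sin (2 * π * (8 * (m:ℝ)) * (1/8)) = 0 := by
        rw [show 2 * π * (8 * (m:ℝ)) * (1/8) = 0 + m * (2 * π) by ring,
          Real.sin_add_nat_mul_two_pi, Real.sin_zero]
      have t11 : Real.sin (2 * π * (8 * (m:ℝ) + 1) * (1/8)) = Real.sqrt 2 / 2 := by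
        rw [show 2 * π * (8 * (m:ℝ) + 1) * (1/8) = π / 4 + m * (2 * π) by ring,
          Real.sin_add_nat_mul_two_pi, s1]
      have t12 : Real.sin (2 * π * (8 * (m:ℝ) + 2) * (1/8)) = 1 := by
        rw [show 2 * π * (8 * (m:ℝ) + 2) * (1/8) = π / 2 + m * (2 * π) by ring,
          Real.sin_add_nat_mul_two_pi, s2]
      have t13 : Real.sin (2 * π * (8 * (m:ℝ) + 3) * (1/8)) = Real.sqrt 2 / 2 := by
        rw [show 2 * π * (8 * (m:ℝ) + 3) * (1/8) = 3 * π / 4 + m * (2 * π) by ring,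
          Real.sin_add_nat_mul_two_pi, s3]
      have t14 : Real.sin (2 * π * (8 * (m:ℝ) + 4) * (1/8)) = 0 := by
        rw [show 2 * π * (8 * (m:ℝ) + 4) * (1/8) = π + m * (2 * π) by ring,
          Real.sin_add_nat_mul_two_pi, s4]
      have t15 : Real.sin (2 * π * (8 * (m:ℝ) + 5) * (1/8)) = -(Real.sqrt 2 / 2) := by
        rw [show 2 * π * (8 * (m:ℝ) + 5) * (1/8) = 5 * π / 4 + m * (2 * π) by ring,
          Real.sin_add_nat_mul_two_pi, s5]
      have t16 : Real.sin (2 * π * (8 * (m:ℝ) + 6) * (1/8)) = -1 := by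
        rw [show 2 * π * (8 * (m:ℝ) + 6) * (1/8) = 3 * π / 2 + m * (2 * π) by ring,
          Real.sin_add_nat_mul_two_pi, s6]
      have t17 : Real.sin (2 * π * (8 * (m:ℝ) + 7) * (1/8)) = -(Real.sqrt 2 / 2) := by
        rw [show 2 * π * (8 * (m:ℝ) + 7) * (1/8) = 7 * π / 4 + m * (2 * π) by ring,
          Real.sin_add_nat_mul_two_pi, s7]
      have t30 : Real.sin (2 * π * (8 * (m:ℝ)) * (3/8)) = 0 := by
        rw [show 2 * π * (8 * (m:ℝ)) * (3/8) = 0 + ((3 * m : ℕ) : ℝ) * (2 * π) by push_cast; ring,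
          Real.sin_add_nat_mul_two_pi, Real.sin_zero]
      have t31 : Real.sin (2 * π * (8 * (m:ℝ) + 1) * (3/8)) = Real.sqrt 2 / 2 := by
        rw [show 2 * π * (8 * (m:ℝ) + 1) * (3/8) = 3 * π / 4 + ((3 * m : ℕ) : ℝ) * (2 * π) by
            push_cast; ring,
          Real.sin_add_nat_mul_two_pi, s3]
      have t32 : Real.sin (2 * π * (8 * (m:ℝ) + 2) * (3/8)) = -1 := by
        rw [show 2 * π * (8 * (m:ℝ) + 2) * (3/8) = 3 * π / 2 + ((3 * m : ℕ) : ℝ) * (2 * π) by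
            push_cast; ring,
          Real.sin_add_nat_mul_two_pi, s6]
      have t33 : Real.sin (2 * π * (8 * (m:ℝ) + 3) * (3/8)) = Real.sqrt 2 / 2 := by
        rw [show 2 * π * (8 * (m:ℝ) + 3) * (3/8) = π / 4 + ((3 * m + 1 : ℕ) : ℝ) * (2 * π) by
            push_cast; ring,
          Real.sin_add_nat_mul_two_pi, s1]
      have t34 : Real.sin (2 * π * (8 * (m:ℝ) + 4) * (3/8)) = 0 := by
        rw [show 2 * π * (8 * (m:ℝ) + 4) * (3/8) = π + ((3 * m + 1 : ℕ) : ℝ) * (2 * π) by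
            push_cast; ring,
          Real.sin_add_nat_mul_two_pi, s4]
      have t35 : Real.sin (2 * π * (8 * (m:ℝ) + 5) * (3/8)) = -(Real.sqrt 2 / 2) := by
        rw [show 2 * π * (8 * (m:ℝ) + 5) * (3/8) = 7 * π / 4 + ((3 * m + 1 : ℕ) : ℝ) * (2 * π) by
            push_cast; ring,
          Real.sin_add_nat_mul_two_pi, s7]
      have t36 : Real.sin (2 * π * (8 * (m:ℝ) + 6) * (3/8)) = 1 := by
        rw [show 2 * π * (8 * (m:ℝ) + 6) * (3/8) = π / 2 + ((3 * m + 2 : ℕ) : ℝ) * (2 * π) by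
            push_cast; ring,
          Real.sin_add_nat_mul_two_pi, s2]
      have t37 : Real.sin (2 * π * (8 * (m:ℝ) + 7) * (3/8)) = -(Real.sqrt 2 / 2) := by
        rw [show 2 * π * (8 * (m:ℝ) + 7) * (3/8) = 5 * π / 4 + ((3 * m + 2 : ℕ) : ℝ) * (2 * π) by
            push_cast; ring,
          Real.sin_add_nat_mul_two_pi, s5]
      rw [t10, t11, t12, t13, t14, t15, t16, t17, t30, t31, t32, t33, t34, t35, t36, t37]
      norm_num
      ring
    exact this ▸ hasSum_fintype _
  have H := hprod.prod_fiberwise key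
  exact (hasSum_mul_left_iff (ne_of_gt h2)).mp H
end

section
/- The series 1 + 1/2 + 1/3 − 1/4 − 1/5 − 1/6 + 1/7 + 1/8 + 1/9 − ⋯, with signs alternating in blocks of three on consecutive integer reciprocals, converges and equals 2π/(3√3) + (ln 2)/3. -/
open Real Filter intervalIntegral

noncomputable def Faux (x : ℝ) : ℝ :=
  Real.log (1 + x) / 3 + Real.log (x ^ 2 - x + 1) / 3
    + 2 / Real.sqrt 3 * Real.arctan ((2 * x - 1) / Real.sqrt 3)

lemma sqrt3_pos : (0:ℝ) < Real.sqrt 3 := Real.sqrt_pos.2 (by norm_num)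
lemma sqrt3_sq : (Real.sqrt 3) ^ 2 = 3 := Real.sq_sqrt (by norm_num)

lemma quad_pos (x : ℝ) : (0:ℝ) < x ^ 2 - x + 1 := by nlinarith [sq_nonneg (x - 1/2)]

lemma Faux_deriv {x : ℝ} (hx : x ∈ Set.uIcc (0:ℝ) 1) :
    HasDerivAt Faux ((1 + x + x ^ 2) / (1 + x ^ 3)) x := by
  rw [Set.uIcc_of_le (by norm_num : (0:ℝ) ≤ 1)] at hx
  obtain ⟨hx0, hx1⟩ := hx
  have h1 : (0:ℝ) < 1 + x := by linarith
  have h2 : (0:ℝ) < x ^ 2 - x + 1 := quad_pos x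
  have h3 : (0:ℝ) < 1 + x ^ 3 := by nlinarith
  have s0 : Real.sqrt 3 ≠ 0 := ne_of_gt sqrt3_pos
  have d1 : HasDerivAt (fun y : ℝ => Real.log (1 + y) / 3) (1 / (1 + x) / 3) x := by
    have : HasDerivAt (fun y : ℝ => (1:ℝ) + y) 1 x := (hasDerivAt_id x).const_add 1
    exact (this.log (by linarith)).div_const 3
  have d2 : HasDerivAt (fun y : ℝ => Real.log (y ^ 2 - y + 1) / 3)
      ((2 * x - 1) / (x ^ 2 - x + 1) / 3) x := by
    have h : HasDerivAt (fun y : ℝ => y ^ 2 - y + 1) (2 * x - 1) x := by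
      have := ((hasDerivAt_pow 2 x).sub (hasDerivAt_id x)).add_const 1
      simpa using this
    exact (h.log (ne_of_gt h2)).div_const 3
  have d3 : HasDerivAt (fun y : ℝ => 2 / Real.sqrt 3 * Real.arctan ((2 * y - 1) / Real.sqrt 3))
      (2 / Real.sqrt 3 * (1 / (1 + ((2 * x - 1) / Real.sqrt 3) ^ 2) * (2 / Real.sqrt 3))) x := by
    have h : HasDerivAt (fun y : ℝ => (2 * y - 1) / Real.sqrt 3) (2 / Real.sqrt 3) x := by
      have := (((hasDerivAt_id x).const_mul 2).sub_const 1).div_const (Real.sqrt 3)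
      simpa using this
    exact (h.arctan).const_mul _
  have := (d1.add d2).add d3
  refine this.congr_deriv ?_
  symm
  have hd : ((2 * x - 1) / Real.sqrt 3) ^ 2 = (2 * x - 1) ^ 2 / 3 := by
    rw [div_pow, sqrt3_sq]
  rw [hd]
  have h4 : (0:ℝ) < 1 + (2 * x - 1) ^ 2 / 3 := by positivity
  have hs3 : Real.sqrt 3 * Real.sqrt 3 = 3 := by
    have := sqrt3_sq; nlinarith
  have h1' := h1.ne'
  have h2' := h2.ne'
  have h3' := h3.ne'
  field_simp
  ring_nf
  simp only [sqrt3_sq]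
  have h5 : (1 - x + x ^ 2 : ℝ) ≠ 0 := by nlinarith
  field_simp
  ring

lemma contOn : ContinuousOn (fun x : ℝ => (1 + x + x ^ 2) / (1 + x ^ 3)) (Set.uIcc 0 1) := by
  apply ContinuousOn.div
  · fun_prop
  · fun_prop
  · intro x hx
    rw [Set.uIcc_of_le (by norm_num : (0:ℝ) ≤ 1)] at hx
    nlinarith [hx.1, pow_nonneg hx.1 3]

lemma arctan_inv_sqrt3 : Real.arctan (1 / Real.sqrt 3) = π / 6 := by
  rw [← Real.tan_pi_div_six]
  exact Real.arctan_tan (by linarith [Real.pi_pos]) (by linarith [Real.pi_pos])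

lemma I_val : ∫ x in (0:ℝ)..1, (1 + x + x ^ 2) / (1 + x ^ 3)
    = 2 * π / (3 * Real.sqrt 3) + Real.log 2 / 3 := by
  rw [integral_eq_sub_of_hasDerivAt (fun x hx => Faux_deriv hx)
    (contOn.intervalIntegrable)]
  unfold Faux
  norm_num [arctan_inv_sqrt3]
  rw [show (-1 : ℝ) / Real.sqrt 3 = -(1 / Real.sqrt 3) by ring, Real.arctan_neg,
    arctan_inv_sqrt3]
  have s0 : Real.sqrt 3 ≠ 0 := ne_of_gt sqrt3_pos
  field_simp
  ring


lemma term_int (m : ℕ) : ∫ x in (0:ℝ)..1, (1 + x + x ^ 2) * (-x ^ 3) ^ m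
    = (-1 : ℝ) ^ m * (1 / (3 * (m:ℝ) + 1) + 1 / (3 * (m:ℝ) + 2) + 1 / (3 * (m:ℝ) + 3)) := by
  have hpt : ∀ x : ℝ, (1 + x + x ^ 2) * (-x ^ 3) ^ m
      = (-1:ℝ)^m * (x ^ (3*m) + (x ^ (3*m+1) + x ^ (3*m+2))) := by
    intro x
    rw [neg_pow, ← pow_mul]
    ring
  simp_rw [hpt]
  rw [integral_const_mul, integral_add ((continuous_pow _).intervalIntegrable _ _)
      (((continuous_pow _).intervalIntegrable _ _).add ((continuous_pow _).intervalIntegrable _ _)),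
    integral_add ((continuous_pow _).intervalIntegrable _ _) ((continuous_pow _).intervalIntegrable _ _),
    integral_pow, integral_pow, integral_pow]
  have h1 : (3*m:ℕ) + 1 ≠ 0 := by omega
  have h2 : (3*m+1:ℕ) + 1 ≠ 0 := by omega
  have h3 : (3*m+2:ℕ) + 1 ≠ 0 := by omega
  rw [zero_pow h1, zero_pow h2, zero_pow h3, one_pow, one_pow, one_pow]
  push_cast
  ring

lemma sum_eq (N : ℕ) : ∑ m ∈ Finset.range N,
      (-1:ℝ)^m * (1 / (3 * (m:ℝ) + 1) + 1 / (3 * (m:ℝ) + 2) + 1 / (3 * (m:ℝ) + 3))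
    = ∫ x in (0:ℝ)..1, ∑ m ∈ Finset.range N, (1 + x + x ^ 2) * (-x ^ 3) ^ m := by
  rw [integral_finset_sum]
  · exact Finset.sum_congr rfl fun m _ => (term_int m).symm
  · intro m _
    exact (by fun_prop : Continuous fun x : ℝ => (1 + x + x ^ 2) * (-x ^ 3) ^ m).intervalIntegrable _ _

lemma contOnR (N : ℕ) : ContinuousOn
    (fun x : ℝ => (1 + x + x ^ 2) * (-x ^ 3) ^ N / (1 + x ^ 3)) (Set.uIcc 0 1) := by
  apply ContinuousOn.div
  · fun_prop
  · fun_prop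
  · intro x hx
    rw [Set.uIcc_of_le (by norm_num : (0:ℝ) ≤ 1)] at hx
    nlinarith [hx.1, pow_nonneg hx.1 3]

lemma diff_eq (N : ℕ) :
    (∫ x in (0:ℝ)..1, (1 + x + x ^ 2) / (1 + x ^ 3))
      - (∫ x in (0:ℝ)..1, ∑ m ∈ Finset.range N, (1 + x + x ^ 2) * (-x ^ 3) ^ m)
    = ∫ x in (0:ℝ)..1, (1 + x + x ^ 2) * (-x ^ 3) ^ N / (1 + x ^ 3) := by
  rw [← integral_sub (contOn.intervalIntegrable)
    ((by fun_prop : Continuous fun x : ℝ =>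
      ∑ m ∈ Finset.range N, (1 + x + x ^ 2) * (-x ^ 3) ^ m).intervalIntegrable _ _)]
  apply integral_congr
  intro x hx
  rw [Set.uIcc_of_le (by norm_num : (0:ℝ) ≤ 1)] at hx
  have hx3 : (0:ℝ) ≤ x ^ 3 := pow_nonneg hx.1 3
  have h3 : (0:ℝ) < 1 + x ^ 3 := by linarith
  have hne : (-x ^ 3 : ℝ) ≠ 1 := by nlinarith
  dsimp only
  rw [← Finset.mul_sum, geom_sum_eq hne]
  have hne2 : (-x ^ 3 - 1 : ℝ) ≠ 0 := by nlinarith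
  field_simp
  ring

lemma bound (N : ℕ) :
    |∫ x in (0:ℝ)..1, (1 + x + x ^ 2) * (-x ^ 3) ^ N / (1 + x ^ 3)| ≤ 3 / (3 * (N:ℝ) + 1) := by
  have h1 := intervalIntegral.abs_integral_le_integral_abs (μ := MeasureTheory.volume)
    (f := fun x : ℝ => (1 + x + x ^ 2) * (-x ^ 3) ^ N / (1 + x ^ 3)) (by norm_num : (0:ℝ) ≤ 1)
  have h2 : (∫ x in (0:ℝ)..1, |(1 + x + x ^ 2) * (-x ^ 3) ^ N / (1 + x ^ 3)|)
      ≤ ∫ x in (0:ℝ)..1, 3 * x ^ (3 * N) := by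
    apply integral_mono_on (by norm_num) ((contOnR N).intervalIntegrable.abs)
      ((by fun_prop : Continuous fun x : ℝ => 3 * x ^ (3 * N)).intervalIntegrable _ _)
    intro x hx
    have hx0 := hx.1
    have hx1 := hx.2
    have hx3 : (0:ℝ) ≤ x ^ 3 := pow_nonneg hx0 3
    have h3 : (0:ℝ) < 1 + x ^ 3 := by linarith
    rw [abs_div, abs_mul, abs_pow, abs_neg, abs_of_nonneg (by positivity : (0:ℝ) ≤ 1 + x + x ^ 2),
      abs_of_nonneg hx3, abs_of_pos h3, ← pow_mul, div_le_iff₀ h3]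
    have hc : (0:ℝ) ≤ 2 - x - x ^ 2 + 3 * x ^ 3 := by nlinarith
    nlinarith [mul_nonneg hc (pow_nonneg hx0 (3 * N))]
  have h3 : (∫ x in (0:ℝ)..1, 3 * x ^ (3 * N)) = 3 / (3 * (N:ℝ) + 1) := by
    rw [integral_const_mul, integral_pow]
    have : ((3*N:ℕ):ℝ) + 1 ≠ 0 := by positivity
    rw [one_pow, zero_pow (by omega : (3*N:ℕ) + 1 ≠ 0)]
    push_cast
    field_simp
    norm_num
  linarith [h1, h2, h3.le, h3.ge]

theorem stmt12 :
    Tendsto (fun N : ℕ => ∑ m ∈ Finset.range N,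
        (-1 : ℝ) ^ m * (1 / (3 * (m : ℝ) + 1) + 1 / (3 * (m : ℝ) + 2)
          + 1 / (3 * (m : ℝ) + 3)))
      atTop (nhds (2 * π / (3 * Real.sqrt 3) + Real.log 2 / 3)) := by
  set I : ℝ := ∫ x in (0:ℝ)..1, (1 + x + x ^ 2) / (1 + x ^ 3) with hIdef
  have key : ∀ N : ℕ, ‖(∑ m ∈ Finset.range N,
      (-1 : ℝ) ^ m * (1 / (3 * (m : ℝ) + 1) + 1 / (3 * (m : ℝ) + 2)
        + 1 / (3 * (m : ℝ) + 3))) - I‖ ≤ 3 / (3 * (N:ℝ) + 1) := by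
    intro N
    rw [Real.norm_eq_abs, abs_sub_comm, sum_eq N, hIdef, diff_eq N]
    exact bound N
  have hden : Tendsto (fun N : ℕ => 3 * (N:ℝ) + 1) atTop atTop :=
    tendsto_atTop_add_const_right _ 1 (tendsto_natCast_atTop_atTop.const_mul_atTop (by norm_num))
  have htend : Tendsto (fun N : ℕ => 3 / (3 * (N:ℝ) + 1)) atTop (nhds 0) := by
    simpa [div_eq_mul_inv] using hden.inv_tendsto_atTop.const_mul (3:ℝ)
  have h0 := squeeze_zero_norm key htend
  have h1 := h0.add_const I
  simp only [sub_add_cancel, zero_add] at h1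
  rwa [hIdef, I_val] at h1
end

section
/- The series 1 + 1/2 + 1/3 + 1/4 − 1/5 − 1/6 − 1/7 − 1/8 + ⋯, with signs alternating in blocks of four on consecutive integer reciprocals, converges and equals π(1 + 2√2)/8 + (ln 2)/4. -/
open Real Filter

noncomputable def gg : ℝ → ℝ := fun x => (1 + x + x^2 + x^3) / (1 + x^4)

lemma gg_cont : Continuous gg := by
  apply Continuous.div (by continuity) (by continuity)
  intro x; positivity

noncomputable def FF : ℝ → ℝ := fun x =>
  Real.sqrt 2 / 2 * (Real.arctan (Real.sqrt 2 * x + 1) + Real.arctan (Real.sqrt 2 * x - 1))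
  + 1/2 * Real.arctan (x^2) + 1/4 * Real.log (1 + x^4)

lemma FF_deriv (x : ℝ) : HasDerivAt FF (gg x) x := by
  have s2 : Real.sqrt 2 ^ 2 = 2 := Real.sq_sqrt (by norm_num)
  have h1 : HasDerivAt (fun y : ℝ => Real.sqrt 2 * y + 1) (Real.sqrt 2) x := by
    simpa using ((hasDerivAt_id x).const_mul (Real.sqrt 2)).add_const 1
  have h2 : HasDerivAt (fun y : ℝ => Real.sqrt 2 * y - 1) (Real.sqrt 2) x := by
    simpa using ((hasDerivAt_id x).const_mul (Real.sqrt 2)).sub_const 1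
  have h3 : HasDerivAt (fun y : ℝ => y^2) (2*x) x := by
    simpa using hasDerivAt_pow 2 x
  have h4 : HasDerivAt (fun y : ℝ => 1 + y^4) (4*x^3) x := by
    simpa using (hasDerivAt_pow 4 x).const_add 1
  have H := ((((h1.arctan.add h2.arctan).const_mul (Real.sqrt 2 / 2)).add
      (h3.arctan.const_mul (1/2 : ℝ))).add
      ((h4.log (by positivity)).const_mul (1/4 : ℝ)))
  convert H using 1
  have hA : (0:ℝ) < 1 + (Real.sqrt 2 * x + 1)^2 := by positivity
  have hB : (0:ℝ) < 1 + (Real.sqrt 2 * x - 1)^2 := by positivity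
  have hC : (0:ℝ) < 1 + (x^2)^2 := by positivity
  have hD : (0:ℝ) < 1 + x^4 := by positivity
  show gg x = _
  unfold gg
  have s4 : Real.sqrt 2 ^ 4 = 4 := by
    rw [show (4:ℕ) = 2*2 from rfl, pow_mul, s2]; norm_num
  field_simp
  ring_nf
  rw [s2, s4]
  ring
  all_goals rfl

lemma integral_gg : ∫ x in (0:ℝ)..1, gg x = π * (1 + 2 * Real.sqrt 2) / 8 + Real.log 2 / 4 := by
  rw [intervalIntegral.integral_eq_sub_of_hasDerivAt (fun x _ => FF_deriv x)
    (gg_cont.intervalIntegrable 0 1)]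
  have s2 : Real.sqrt 2 ^ 2 = 2 := Real.sq_sqrt (by norm_num)
  have harc : Real.arctan (Real.sqrt 2 - 1) = π/2 - Real.arctan (Real.sqrt 2 + 1) := by
    have h : Real.sqrt 2 - 1 = (Real.sqrt 2 + 1)⁻¹ := by
      have : (0:ℝ) < Real.sqrt 2 + 1 := by positivity
      field_simp
      nlinarith [s2]
    rw [h, Real.arctan_inv_of_pos (by positivity)]
  have h0 : FF 0 = 0 := by
    simp [FF, Real.arctan_one, Real.arctan_neg]
  have h1 : FF 1 = Real.sqrt 2 / 2 * (π/2) + 1/2 * (π/4) + 1/4 * Real.log 2 := by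
    simp only [FF, mul_one, Real.arctan_one, one_pow]
    rw [harc]
    norm_num
  rw [h0, h1]; ring

lemma partial_sum (N : ℕ) :
    ∑ m ∈ Finset.range N,
        (-1 : ℝ) ^ m * (1 / (4 * (m : ℝ) + 1) + 1 / (4 * (m : ℝ) + 2)
          + 1 / (4 * (m : ℝ) + 3) + 1 / (4 * (m : ℝ) + 4))
    = ∫ x in (0:ℝ)..1, (gg x - gg x * (-x^4)^N) := by
  have hint : ∀ m : ℕ, IntervalIntegrable
      (fun x : ℝ => (-1:ℝ)^m * (x^(4*m) + x^(4*m+1) + x^(4*m+2) + x^(4*m+3))) MeasureTheory.volume 0 1 :=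
    fun m => (Continuous.intervalIntegrable (by continuity) 0 1)
  have key : ∀ x : ℝ, gg x - gg x * (-x^4)^N
      = ∑ m ∈ Finset.range N, (-1:ℝ)^m * (x^(4*m) + x^(4*m+1) + x^(4*m+2) + x^(4*m+3)) := by
    intro x
    have hx4 : (0:ℝ) ≤ x^4 := by positivity
    have hne : (-x^4 : ℝ) ≠ 1 := by nlinarith
    have hsum : ∑ m ∈ Finset.range N, (-1:ℝ)^m * (x^(4*m) + x^(4*m+1) + x^(4*m+2) + x^(4*m+3))
        = (1 + x + x^2 + x^3) * ∑ m ∈ Finset.range N, (-x^4)^m := by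
      rw [Finset.mul_sum]
      refine Finset.sum_congr rfl fun m _ => ?_
      rw [neg_pow (x^4) m, ← pow_mul]
      ring
    rw [hsum, geom_sum_eq hne]
    have hd : (1:ℝ) + x^4 ≠ 0 := by positivity
    have hd2 : (-x^4 - 1 : ℝ) ≠ 0 := by intro h; apply hd; linarith
    unfold gg
    rw [neg_pow (x^4) N, ← pow_mul]
    field_simp
    ring
  calc ∑ m ∈ Finset.range N,
        (-1 : ℝ) ^ m * (1 / (4 * (m : ℝ) + 1) + 1 / (4 * (m : ℝ) + 2)
          + 1 / (4 * (m : ℝ) + 3) + 1 / (4 * (m : ℝ) + 4))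
      = ∑ m ∈ Finset.range N, ∫ x in (0:ℝ)..1,
          (-1:ℝ)^m * (x^(4*m) + x^(4*m+1) + x^(4*m+2) + x^(4*m+3)) := by
        refine Finset.sum_congr rfl fun m _ => ?_
        rw [intervalIntegral.integral_const_mul]
        rw [intervalIntegral.integral_add (((Continuous.intervalIntegrable (by continuity) 0 1)))
            ((Continuous.intervalIntegrable (by continuity) 0 1)),
          intervalIntegral.integral_add (((Continuous.intervalIntegrable (by continuity) 0 1)))
            ((Continuous.intervalIntegrable (by continuity) 0 1)),
          intervalIntegral.integral_add (((Continuous.intervalIntegrable (by continuity) 0 1)))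
            ((Continuous.intervalIntegrable (by continuity) 0 1))]
        simp only [integral_pow]
        push_cast
        norm_num
        ring
    _ = ∫ x in (0:ℝ)..1, ∑ m ∈ Finset.range N,
          (-1:ℝ)^m * (x^(4*m) + x^(4*m+1) + x^(4*m+2) + x^(4*m+3)) := by
        rw [intervalIntegral.integral_finset_sum]
        exact fun m _ => hint m
    _ = ∫ x in (0:ℝ)..1, (gg x - gg x * (-x^4)^N) := by
        refine intervalIntegral.integral_congr fun x _ => ?_
        rw [key]

lemma rem_tendsto :
    Tendsto (fun N : ℕ => ∫ x in (0:ℝ)..1, gg x * x^(4*N)) atTop (nhds 0) := by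
  have hb : ∀ N : ℕ, |∫ x in (0:ℝ)..1, gg x * x^(4*N)| ≤ 4 / (4*(N:ℝ)+1) := by
    intro N
    have hnn : (0:ℝ) ≤ ∫ x in (0:ℝ)..1, gg x * x^(4*N) := by
      apply intervalIntegral.integral_nonneg (by norm_num)
      intro x hx
      have hx0 : (0:ℝ) ≤ x := hx.1
      have : (0:ℝ) < 1 + x^4 := by positivity
      have : (0:ℝ) ≤ gg x := by unfold gg; positivity
      positivity
    have hle : (∫ x in (0:ℝ)..1, gg x * x^(4*N)) ≤ ∫ x in (0:ℝ)..1, 4 * x^(4*N) := by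
      apply intervalIntegral.integral_mono_on (by norm_num)
        ((gg_cont.mul (continuous_pow _)).intervalIntegrable 0 1)
        (Continuous.intervalIntegrable (by continuity) 0 1)
      intro x hx
      obtain ⟨hx0, hx1⟩ := hx
      have hp : (0:ℝ) ≤ x^(4*N) := by positivity
      have hgle : gg x ≤ 4 := by
        unfold gg
        rw [div_le_iff₀ (by positivity)]
        nlinarith [pow_le_one₀ hx0 hx1 (n := 2), pow_le_one₀ hx0 hx1 (n := 3),
          pow_nonneg hx0 4]
      show gg x * x ^ (4 * N) ≤ 4 * x ^ (4 * N)
      nlinarith []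
    have : (∫ x in (0:ℝ)..1, 4 * x^(4*N)) = 4 / (4*(N:ℝ)+1) := by
      rw [intervalIntegral.integral_const_mul, integral_pow]
      push_cast
      ring
    rw [abs_of_nonneg hnn]
    linarith [hle, this.le, this.ge]
  have hlim : Tendsto (fun N : ℕ => 4 / (4*(N:ℝ)+1)) atTop (nhds 0) := by
    apply Tendsto.div_atTop tendsto_const_nhds
    apply tendsto_atTop_add_const_right
    exact Tendsto.const_mul_atTop (by norm_num) tendsto_natCast_atTop_atTop
  exact squeeze_zero_norm (fun N => by simpa using hb N) hlim

theorem stmt13 :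
    Tendsto (fun N : ℕ => ∑ m ∈ Finset.range N,
        (-1 : ℝ) ^ m * (1 / (4 * (m : ℝ) + 1) + 1 / (4 * (m : ℝ) + 2)
          + 1 / (4 * (m : ℝ) + 3) + 1 / (4 * (m : ℝ) + 4)))
      atTop (nhds (π * (1 + 2 * Real.sqrt 2) / 8 + Real.log 2 / 4)) := by
  set L := π * (1 + 2 * Real.sqrt 2) / 8 + Real.log 2 / 4 with hL
  set r : ℕ → ℝ := fun N => ∫ x in (0:ℝ)..1, gg x * x^(4*N) with hr
  have hsplit : ∀ N : ℕ, ∑ m ∈ Finset.range N,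
        (-1 : ℝ) ^ m * (1 / (4 * (m : ℝ) + 1) + 1 / (4 * (m : ℝ) + 2)
          + 1 / (4 * (m : ℝ) + 3) + 1 / (4 * (m : ℝ) + 4))
      = L - (-1:ℝ)^N * r N := by
    intro N
    rw [partial_sum N]
    rw [intervalIntegral.integral_sub (g := fun x => gg x * (-x^4)^N) (gg_cont.intervalIntegrable 0 1)
      (((gg_cont.mul (by continuity : Continuous fun x : ℝ => (-x^4)^N)).intervalIntegrable 0 1 :
        IntervalIntegrable (fun x => gg x * (-x^4)^N) MeasureTheory.volume 0 1))]
    rw [integral_gg, ← hL]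
    congr 1
    have : ∀ x : ℝ, gg x * (-x^4)^N = (-1:ℝ)^N * (gg x * x^(4*N)) := by
      intro x
      rw [neg_pow (x^4) N, ← pow_mul]
      ring
    rw [intervalIntegral.integral_congr (fun x _ => this x),
      intervalIntegral.integral_const_mul]
  have herr : Tendsto (fun N : ℕ => (-1:ℝ)^N * r N) atTop (nhds 0) := by
    have habs : Tendsto (fun N : ℕ => |r N|) atTop (nhds 0) := by
      have := rem_tendsto.abs
      simpa using this
    exact squeeze_zero_norm (fun N => by simp [abs_mul]) habs
  have : Tendsto (fun N : ℕ => L - (-1:ℝ)^N * r N) atTop (nhds (L - 0)) :=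
    tendsto_const_nhds.sub herr
  rw [sub_zero] at this
  exact this.congr fun N => (hsplit N).symm
end

section
/- For every real x with −1 < x < 1, the series 1/(1+x)² + 1/(3−x)² + 1/(5+x)² + 1/(7−x)² + ⋯ converges and equals π²/(8(1 + sin(πx/2))). -/
open Real MeasureTheory
open scoped Real

noncomputable section
namespace Stmt16Aux
open Complex AddCircle

lemma fourierCoeff_congr_ae {T : ℝ} [hT : Fact (0 < T)] {f g : AddCircle T → ℂ}
    (h : f =ᵐ[haarAddCircle] g) (n : ℤ) : fourierCoeff f n = fourierCoeff g n := by
  unfold fourierCoeff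
  exact integral_congr_ae (h.mono fun x hx => by dsimp only; rw [hx])

lemma key_coeff {a : ℝ} (ha : 0 < a) (ha' : a < 1) (n : ℤ) :
    fourierCoeff (AddCircle.liftIoc 1 0 (fun t : ℝ => Complex.exp ((2 * π * a * t : ℝ) * Complex.I))) n
      = (Complex.exp ((2 * π * a : ℝ) * Complex.I) - 1) / (2 * π * ((a : ℂ) - n) * Complex.I) := by
  haveI : Fact ((0:ℝ) < 1) := ⟨one_pos⟩
  have han : (a : ℂ) - n ≠ 0 := by
    have : (a : ℝ) ≠ (n : ℝ) := by
      rcases le_or_gt n 0 with h | h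
      · have : (n : ℝ) ≤ 0 := by exact_mod_cast h
        linarith
      · have h1 : (1 : ℤ) ≤ n := h
        have : (1 : ℝ) ≤ (n : ℝ) := by exact_mod_cast h1
        linarith
    intro h
    apply this
    have := sub_eq_zero.mp h
    exact_mod_cast this
  have hc : (2 * (π:ℂ) * ((a : ℂ) - n) * Complex.I) ≠ 0 := by
    apply mul_ne_zero (mul_ne_zero (mul_ne_zero two_ne_zero _) han) Complex.I_ne_zero
    exact_mod_cast Real.pi_ne_zero
  haveI : Fact ((0:ℝ) < (0:ℝ) + 1 - 0) := ⟨by norm_num⟩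
  rw [fourierCoeff_liftIoc_eq, fourierCoeffOn_eq_integral]
  have h1 : ∀ x : ℝ, (fourier (-n) (x : AddCircle ((0:ℝ) + 1 - 0)) : ℂ) •
      Complex.exp ((2 * π * a * x : ℝ) * Complex.I)
      = Complex.exp ((2 * (π:ℂ) * ((a:ℂ) - n) * Complex.I) * x) := by
    intro t
    rw [fourier_coe_apply, smul_eq_mul, ← Complex.exp_add]
    congr 1
    push_cast
    ring
  simp_rw [h1]
  rw [integral_exp_mul_complex hc]
  norm_num
  have h2 : Complex.exp (2 * (π:ℂ) * ((a:ℂ) - n) * Complex.I)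
      = Complex.exp ((2 * π * a : ℝ) * Complex.I) := by
    rw [show 2 * (π:ℂ) * ((a:ℂ) - n) * Complex.I
        = ((2 * π * a : ℝ) : ℂ) * Complex.I + ((-n : ℤ) : ℂ) * (2 * π * Complex.I) by push_cast; ring,
      Complex.exp_add, Complex.exp_int_mul_two_pi_mul_I, mul_one]
  rw [h2]
  push_cast
  ring_nf

lemma norm_num_sq {a : ℝ} :
    ‖Complex.exp ((2 * π * a : ℝ) * Complex.I) - 1‖ ^ 2 = 4 * Real.sin (π * a) ^ 2 := by
  rw [Complex.sq_norm, Complex.normSq_apply]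
  simp only [Complex.sub_re, Complex.sub_im, Complex.exp_ofReal_mul_I_re,
    Complex.exp_ofReal_mul_I_im, Complex.one_re, Complex.one_im]
  have h2 : Real.cos (2 * π * a) = 2 * Real.cos (π * a) ^ 2 - 1 := by
    rw [show 2 * π * a = 2 * (π * a) by ring, Real.cos_two_mul]
  nlinarith [Real.sin_sq_add_cos_sq (π * a), Real.sin_sq_add_cos_sq (2 * π * a)]

lemma norm_den_sq {a : ℝ} (n : ℤ) :
    ‖2 * (π:ℂ) * ((a : ℂ) - n) * Complex.I‖ ^ 2 = 4 * π ^ 2 * ((n:ℝ) - a) ^ 2 := by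
  have : 2 * (π:ℂ) * ((a : ℂ) - n) * Complex.I = ((2 * π * (a - n) : ℝ) : ℂ) * Complex.I := by
    push_cast; ring
  rw [this, norm_mul, Complex.norm_I, mul_one, Complex.norm_real, Real.norm_eq_abs,
    _root_.sq_abs]
  ring

lemma summable_aux (b : ℝ) : Summable (fun n : ℤ => 1 / ((n:ℝ) + b) ^ 2) := by
  have h := (Real.summable_one_div_int_add_rpow b 2).mpr one_lt_two
  refine h.congr fun n => ?_
  rw [show ((2:ℝ)) = ((2:ℕ):ℝ) by norm_num, Real.rpow_natCast, _root_.sq_abs]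

lemma key_parseval {a : ℝ} (ha : 0 < a) (ha' : a < 1) :
    HasSum (fun n : ℤ => 1 / ((n : ℝ) + a) ^ 2) (π ^ 2 / Real.sin (π * a) ^ 2) := by
  haveI : Fact ((0:ℝ) < 1) := ⟨one_pos⟩
  set g : ℝ → ℂ := fun t : ℝ => Complex.exp ((2 * π * a * t : ℝ) * Complex.I) with hg
  have hFnorm : ∀ z : AddCircle (1:ℝ), ‖AddCircle.liftIoc 1 0 g z‖ = 1 := by
    intro z
    show ‖g ((AddCircle.equivIoc 1 0 z : ℝ))‖ = 1
    rw [hg]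
    simp [Complex.norm_exp]
  have hmeasF : Measurable (AddCircle.liftIoc 1 0 g) := by
    have h : AddCircle.liftIoc 1 0 g
        = g ∘ (Subtype.val) ∘ (AddCircle.measurableEquivIoc 1 0) := rfl
    rw [h, hg]
    exact ((Complex.continuous_exp.comp (by fun_prop)).measurable).comp
      (measurable_subtype_coe.comp (AddCircle.measurableEquivIoc 1 0).measurable)
  have hmem : MemLp (AddCircle.liftIoc 1 0 g) 2 haarAddCircle :=
    MemLp.of_bound hmeasF.aestronglyMeasurable 1 (Filter.Eventually.of_forall fun z => (hFnorm z).le)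
  have hcoe : ⇑(hmem.toLp _) =ᵐ[haarAddCircle] AddCircle.liftIoc 1 0 g := hmem.coeFn_toLp
  have hpars := tsum_sq_fourierCoeff (hmem.toLp _)
  have hR : ∫ t : AddCircle (1:ℝ), ‖(hmem.toLp _) t‖^2 ∂haarAddCircle = 1 := by
    rw [integral_congr_ae ((hcoe.mono fun z hz => by dsimp only; rw [hz]) :
      (fun t => ‖(hmem.toLp _) t‖^2) =ᵐ[haarAddCircle] fun t => ‖AddCircle.liftIoc 1 0 g t‖^2)]
    simp only [hFnorm, one_pow, integral_const, probReal_univ, measure_univ, ENNReal.toReal_one, smul_eq_mul,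
      mul_one]
  have hpars' : ∑' i : ℤ, ‖fourierCoeff (AddCircle.liftIoc 1 0 g) i‖^2 = 1 := by
    have e : ∀ i : ℤ, ‖fourierCoeff (AddCircle.liftIoc 1 0 g) i‖^2
        = ‖fourierCoeff (⇑(hmem.toLp _)) i‖^2 := fun i => by
      rw [fourierCoeff_congr_ae hcoe]
    rw [tsum_congr e, hpars, hR]
  have hs := (summable_aux a).hasSum
  set s := ∑' n : ℤ, 1 / ((n:ℝ) + a) ^ 2 with hsdef
  have hs2 : HasSum (fun n : ℤ => 1 / ((n:ℝ) - a) ^ 2) s := by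
    have h := (Equiv.neg ℤ).hasSum_iff.mpr hs
    refine h.congr_fun fun n => ?_
    show (1:ℝ) / ((n:ℝ) - a) ^ 2 = 1 / (((Equiv.neg ℤ n : ℤ):ℝ) + a) ^ 2
    simp only [Equiv.neg_apply, Int.cast_neg]
    rw [show (-(n:ℝ) + a) = -((n:ℝ) - a) by ring, neg_sq]
  have hd : ∀ n : ℤ, ((n:ℝ) - a) ≠ 0 := by
    intro n
    rcases le_or_gt n 0 with h | h
    · have : (n : ℝ) ≤ 0 := by exact_mod_cast h
      intro hh; nlinarith
    · have h1 : (1 : ℤ) ≤ n := h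
      have : (1 : ℝ) ≤ (n : ℝ) := by exact_mod_cast h1
      intro hh; nlinarith
  have hnorm : ∀ n : ℤ, ‖fourierCoeff (AddCircle.liftIoc 1 0 g) n‖^2
      = (Real.sin (π * a) ^ 2 / π ^ 2) * (1 / ((n:ℝ) - a) ^ 2) := by
    intro n
    rw [hg, key_coeff ha ha' n, norm_div, div_pow, norm_num_sq, norm_den_sq]
    have hπ := Real.pi_ne_zero
    field_simp [hd n]
  have h1 : HasSum (fun n : ℤ => ‖fourierCoeff (AddCircle.liftIoc 1 0 g) n‖^2)
      ((Real.sin (π * a) ^ 2 / π ^ 2) * s) :=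
    (hs2.mul_left _).congr_fun fun n => (hnorm n)
  have hKs : (Real.sin (π * a) ^ 2 / π ^ 2) * s = 1 := by
    rw [← h1.tsum_eq]; exact hpars'
  have hsin : Real.sin (π * a) ≠ 0 :=
    ne_of_gt (Real.sin_pos_of_pos_of_lt_pi (by positivity)
      (by nlinarith [Real.pi_pos]))
  have hπ := Real.pi_ne_zero
  have hval : s = π ^ 2 / Real.sin (π * a) ^ 2 := by
    field_simp at hKs ⊢
    linarith
  exact hval ▸ hs

end Stmt16Aux

open Real in
theorem stmt16 (x : ℝ) (hx : -1 < x) (hx' : x < 1) :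
    HasSum (fun n : ℕ => 1 / ((2 * (n : ℝ) + 1) + (-1 : ℝ) ^ n * x) ^ 2)
      (π ^ 2 / (8 * (1 + Real.sin (π * x / 2)))) := by
  have ha : 0 < (1 + x) / 4 := by linarith
  have ha' : (1 + x) / 4 < 1 := by linarith
  have key := Stmt16Aux.key_parseval ha ha'
  have h2 : 2 * Real.sin (π * ((1 + x) / 4)) ^ 2 = 1 + Real.sin (π * x / 2) := by
    have e1 : Real.cos (π / 2 + π * x / 2) = - Real.sin (π * x / 2) := by
      rw [Real.cos_add, Real.cos_pi_div_two, Real.sin_pi_div_two]; ring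
    have e2 : Real.cos (π / 2 + π * x / 2) = 1 - 2 * Real.sin (π * ((1 + x) / 4)) ^ 2 := by
      rw [show π / 2 + π * x / 2 = 2 * (π * ((1 + x) / 4)) by ring, Real.cos_two_mul]
      nlinarith [Real.sin_sq_add_cos_sq (π * ((1 + x) / 4))]
    linarith
  have key2 : HasSum (fun m : ℤ => 1 / (4 * (m:ℝ) + 1 + x) ^ 2)
      (π ^ 2 / (8 * (1 + Real.sin (π * x / 2)))) := by
    have h16 := key.div_const 16
    have heq : π ^ 2 / Real.sin (π * ((1 + x) / 4)) ^ 2 / 16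
        = π ^ 2 / (8 * (1 + Real.sin (π * x / 2))) := by
      rw [← h2, div_div]
      congr 1
      ring
    rw [heq] at h16
    refine h16.congr_fun fun m => ?_
    rw [div_div, show ((m:ℝ) + (1 + x) / 4) ^ 2 * 16 = (4 * (m:ℝ) + 1 + x) ^ 2 by ring]
  -- split into ℕ-indexed parts
  have hsumF : Summable (fun m : ℤ => 1 / (4 * (m:ℝ) + 1 + x) ^ 2) := key2.summable
  have hA : Summable (fun k : ℕ => 1 / (4 * ((k:ℤ):ℝ) + 1 + x) ^ 2) :=
    hsumF.comp_injective (fun a b hab => by omega)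
  have hB : Summable (fun k : ℕ => 1 / (4 * ((-(k+1) : ℤ):ℝ) + 1 + x) ^ 2) :=
    hsumF.comp_injective (fun a b hab => by omega)
  have hAB : HasSum (fun m : ℤ => 1 / (4 * (m:ℝ) + 1 + x) ^ 2)
      ((∑' k : ℕ, 1 / (4 * ((k:ℤ):ℝ) + 1 + x) ^ 2)
        + (∑' k : ℕ, 1 / (4 * ((-(k+1) : ℤ):ℝ) + 1 + x) ^ 2)) :=
    HasSum.of_nat_of_neg_add_one hA.hasSum hB.hasSum
  have hsum_eq := hAB.unique key2
  rw [← hsum_eq]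
  apply HasSum.even_add_odd
  · refine hA.hasSum.congr_fun fun k => ?_
    simp only [pow_mul, neg_one_sq, one_pow, one_mul]
    push_cast
    ring_nf
  · refine hB.hasSum.congr_fun fun k => ?_
    simp only [pow_succ, pow_mul, neg_one_sq, one_pow, one_mul]
    push_cast
    ring_nf

end
end

section
/- For every real x with 0 < |x| < 1, the series 1/x² + ∑_{n=1}^{∞} [1/(2n−x)² + 1/(2n+x)²] converges and equals π² cos(πx/2)(1 + (sec(πx/2) + tan(πx/2))²) / (8 sin²(πx/2)(sec(πx/2) + tan(πx/2))). -/
open Real MeasureTheory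
open scoped ENNReal

theorem aux_hasSum (a : ℝ) (ha0 : a ≠ 0) (ha : |a| < 1/2) :
    HasSum (fun n : ℤ => 1 / (a + (n:ℝ)) ^ 2) (π ^ 2 / Real.sin (π * a) ^ 2) := by
  haveI : Fact (0 < (1:ℝ)) := ⟨one_pos⟩
  set g : ℝ → ℂ := fun t => Complex.exp ((2 * π * a * t : ℝ) * Complex.I) with hg
  set F : AddCircle (1:ℝ) → ℂ := AddCircle.liftIoc 1 0 g with hF
  have hgnorm : ∀ s : ℝ, ‖g s‖ = 1 := by
    intro s
    rw [hg]
    beta_reduce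
    exact Complex.norm_exp_ofReal_mul_I _
  have hFnorm : ∀ t, ‖F t‖ = 1 := by
    intro t
    rw [hF, AddCircle.liftIoc, Function.comp_apply, Set.restrict_apply]
    exact hgnorm _
  have hmeasIoc : Measurable (⇑(AddCircle.equivIoc (1:ℝ) 0)) :=
    (AddCircle.measurableEquivIoc 1 0).measurable
  have hg_cont : Continuous g := by
    apply Complex.continuous_exp.comp
    exact (Complex.continuous_ofReal.comp (continuous_const.mul continuous_id)).mul
      continuous_const
  have hmeas : Measurable F := by
    rw [hF, AddCircle.liftIoc, Set.restrict_eq]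
    exact (hg_cont.measurable.comp measurable_subtype_coe).comp hmeasIoc
  have hmem : MemLp F 2 (AddCircle.haarAddCircle) :=
    MemLp.of_bound hmeas.aestronglyMeasurable 1 (Filter.Eventually.of_forall fun t => (hFnorm t).le)
  set fLp := hmem.toLp F with hfLp
  have hpars := tsum_sq_fourierCoeff fLp
  have hRHS : ∫ t : AddCircle 1, ‖fLp t‖ ^ 2 ∂AddCircle.haarAddCircle = 1 := by
    rw [integral_congr_ae ((hmem.coeFn_toLp).mono fun t ht => by rw [ht])]
    simp only [hFnorm, one_pow]
    simp
  have han : ∀ n : ℤ, a - (n:ℝ) ≠ 0 := by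
    intro n h
    have h2 : (n:ℝ) = a := by linarith
    have h3 : |(n:ℝ)| < 1/2 := by rw [h2]; exact ha
    rw [← Int.cast_abs] at h3
    have h4 : |n| < 1 := by exact_mod_cast h3.trans (by norm_num : (1/2:ℝ) < 1)
    rw [abs_lt] at h4
    have h5 : n = 0 := by omega
    rw [h5] at h2
    simp at h2
    exact ha0 h2.symm
  have hcoeff : ∀ n : ℤ, fourierCoeff (⇑fLp) n
      = (Complex.exp (((2*π*a : ℝ)) * Complex.I) - 1) / (2*π*(a - (n:ℝ))*Complex.I) := by
    intro n
    have hc0 : (2*(π:ℂ)*((a:ℂ) - (n:ℂ))*Complex.I) ≠ 0 := by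
      apply mul_ne_zero (mul_ne_zero (mul_ne_zero two_ne_zero ?_) ?_) Complex.I_ne_zero
      · exact Complex.ofReal_ne_zero.mpr Real.pi_ne_zero
      · rw [show ((a:ℂ) - (n:ℂ)) = ((a - (n:ℝ) : ℝ) : ℂ) by push_cast; ring]
        exact Complex.ofReal_ne_zero.mpr (han n)
    have h1 : fourierCoeff (⇑fLp) n = fourierCoeff F n := by
      unfold fourierCoeff
      apply integral_congr_ae
      filter_upwards [hmem.coeFn_toLp] with t ht
      rw [ht]
    rw [h1, hF, fourierCoeff_liftIoc_eq, fourierCoeffOn_eq_integral]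
    rw [intervalIntegral.integral_congr
      (g := fun x : ℝ => Complex.exp ((2*(π:ℂ)*((a:ℂ) - (n:ℂ))*Complex.I) * x))
      (fun x hx => by
        rw [fourier_coe_apply, smul_eq_mul, hg, ← Complex.exp_add]
        congr 1
        push_cast
        field_simp
        ring)]
    rw [integral_exp_mul_complex hc0]
    rw [show (2*(π:ℂ)*((a:ℂ) - (n:ℂ))*Complex.I) * (((0:ℝ)+1 : ℝ):ℂ) = ((2*π*a:ℝ):ℂ) * Complex.I + (-n : ℤ) * (2*(π:ℂ)*Complex.I) by push_cast; ring]
    rw [Complex.exp_add, Complex.exp_int_mul_two_pi_mul_I, mul_one]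
    rw [show (2*(π:ℂ)*((a:ℂ) - (n:ℂ))*Complex.I) * (((0:ℝ)):ℂ) = 0 by push_cast; ring, Complex.exp_zero]
    push_cast
    norm_num
  have hpi := Real.pi_ne_zero
  have hsin : Real.sin (π * a) ≠ 0 := by
    rcases lt_or_gt_of_ne ha0 with h | h
    · have h1 : 0 < π * (-a) := mul_pos Real.pi_pos (neg_pos.mpr h)
      have h2 : π * (-a) < π := by
        nlinarith [Real.pi_pos, abs_lt.mp ha]
      have := Real.sin_pos_of_pos_of_lt_pi h1 h2
      rw [show π * (-a) = -(π * a) by ring, Real.sin_neg] at this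
      linarith
    · have h1 : 0 < π * a := by positivity
      have h2 : π * a < π := by nlinarith [Real.pi_pos, abs_lt.mp ha]
      exact (Real.sin_pos_of_pos_of_lt_pi h1 h2).ne'
  have hnormsq : ∀ n : ℤ, ‖fourierCoeff (⇑fLp) n‖ ^ 2
      = (Real.sin (π * a) ^ 2 / π ^ 2) * (1 / (a - (n:ℝ)) ^ 2) := by
    intro n
    rw [hcoeff n, norm_div]
    have hE : Complex.exp (((2*π*a : ℝ):ℂ) * Complex.I)
        = Complex.ofReal (Real.cos (2*π*a)) + Complex.ofReal (Real.sin (2*π*a)) * Complex.I := by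
      rw [Complex.exp_mul_I, Complex.ofReal_cos, Complex.ofReal_sin]
    have hnum : ‖Complex.exp (((2*π*a : ℝ):ℂ) * Complex.I) - 1‖ ^ 2
        = 4 * Real.sin (π * a) ^ 2 := by
      rw [hE, Complex.sq_norm, Complex.normSq_apply]
      simp only [Complex.sub_re, Complex.add_re, Complex.ofReal_re, Complex.mul_re,
        Complex.ofReal_im, Complex.I_re, Complex.I_im, Complex.sub_im, Complex.add_im,
        Complex.mul_im, Complex.one_re, Complex.one_im]
      have hpy2 := Real.sin_sq_add_cos_sq (2*π*a)
      have hpy := Real.sin_sq_add_cos_sq (π*a)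
      have hcos : Real.cos (2*π*a) = 2 * Real.cos (π*a)^2 - 1 := by
        rw [show 2*π*a = 2*(π*a) by ring, Real.cos_two_mul]
      linear_combination hpy2 - 2*hcos - 4*hpy
    have hden : ‖(2*(π:ℂ)*((a:ℂ)-(((n:ℝ)):ℂ))*Complex.I)‖ ^ 2 = 4 * π^2 * (a - (n:ℝ))^2 := by
      rw [show (2*(π:ℂ)*((a:ℂ)-(((n:ℝ)):ℂ))*Complex.I) = ((2*π*(a-(n:ℝ)) : ℝ):ℂ) * Complex.I by
        push_cast; ring]
      rw [norm_mul, Complex.norm_real, Real.norm_eq_abs,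
        Complex.norm_I, mul_one, sq_abs]
      ring
    rw [div_pow, hnum, hden]
    have h2 := han n
    field_simp
  have hsummable : Summable fun n : ℤ => ‖fourierCoeff (⇑fLp) n‖ ^ 2 := by
    have h := lp.memℓp (fourierBasis.repr fLp)
    rw [memℓp_gen_iff (by norm_num : 0 < (2:ℝ≥0∞).toReal)] at h
    refine h.congr fun i => ?_
    rw [fourierBasis_repr]
    norm_num
  have hsum1 : HasSum (fun n : ℤ => ‖fourierCoeff (⇑fLp) n‖ ^ 2) 1 := by
    have h := hsummable.hasSum
    rwa [hpars, hRHS] at h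
  simp only [hnormsq] at hsum1
  have hsum3 := hsum1.mul_left (π ^ 2 / Real.sin (π * a) ^ 2)
  rw [mul_one] at hsum3
  have hsum4 : HasSum (fun n : ℤ => 1 / (a - (n:ℝ)) ^ 2) (π ^ 2 / Real.sin (π * a) ^ 2) := by
    have heq : ∀ n : ℤ, (π ^ 2 / Real.sin (π * a) ^ 2)
        * (Real.sin (π * a) ^ 2 / π ^ 2 * (1 / (a - (n:ℝ)) ^ 2)) = 1 / (a - (n:ℝ)) ^ 2 := by
      intro n
      field_simp
    simpa only [heq] using hsum3
  have h5 := ((Equiv.neg ℤ).hasSum_iff).mpr hsum4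
  simp only [Function.comp_def, Equiv.neg_apply, Int.cast_neg, sub_neg_eq_add] at h5
  exact h5


theorem stmt17 (x : ℝ) (h0 : x ≠ 0) (h1 : |x| < 1) :
    HasSum (fun n : ℕ =>
        if n = 0 then 1 / x ^ 2
        else 1 / (2 * (n : ℝ) - x) ^ 2 + 1 / (2 * (n : ℝ) + x) ^ 2)
      (π ^ 2 * Real.cos (π * x / 2)
          * (1 + (1 / Real.cos (π * x / 2) + Real.tan (π * x / 2)) ^ 2)
        / (8 * Real.sin (π * x / 2) ^ 2
          * (1 / Real.cos (π * x / 2) + Real.tan (π * x / 2)))) := by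
  have hx0 : x / 2 ≠ 0 := div_ne_zero h0 two_ne_zero
  have hx2 : |x / 2| < 1 / 2 := by
    rw [abs_div]
    simp only [abs_two]
    linarith
  have H := aux_hasSum (x / 2) hx0 hx2
  rw [show π * (x / 2) = π * x / 2 by ring] at H
  have hpi := Real.pi_ne_zero
  -- trigonometric facts
  have hcpos : 0 < Real.cos (π * x / 2) := by
    apply Real.cos_pos_of_mem_Ioo
    constructor
    · rw [show -(π/2) = π/2 * (-1) by ring, show π * x / 2 = π/2 * x by ring]
      exact (mul_lt_mul_iff_right₀ (by positivity)).mpr (neg_lt_of_abs_lt h1)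
    · rw [show π * x / 2 = π/2 * x by ring]
      nth_rewrite 2 [show π/2 = π/2 * 1 by ring]
      exact (mul_lt_mul_iff_right₀ (by positivity)).mpr (lt_of_abs_lt h1)
  have hc : Real.cos (π * x / 2) ≠ 0 := hcpos.ne'
  have hs : Real.sin (π * x / 2) ≠ 0 := by
    rcases lt_or_gt_of_ne h0 with h | h
    · have h1' : 0 < π * (-x) / 2 := div_pos (mul_pos Real.pi_pos (neg_pos.mpr h)) two_pos
      have h2' : π * (-x) / 2 < π := by nlinarith [Real.pi_pos, abs_lt.mp h1]
      have := Real.sin_pos_of_pos_of_lt_pi h1' h2'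
      rw [show π * (-x) / 2 = -(π * x / 2) by ring, Real.sin_neg] at this
      linarith
    · have h1' : 0 < π * x / 2 := by positivity
      have h2' : π * x / 2 < π := by nlinarith [Real.pi_pos, abs_lt.mp h1]
      exact (Real.sin_pos_of_pos_of_lt_pi h1' h2').ne'
  have hpyth := Real.sin_sq_add_cos_sq (π * x / 2)
  have hs1 : (0:ℝ) < 1 + Real.sin (π * x / 2) := by nlinarith [hpyth, pow_pos hcpos 2, sq_nonneg (1 + Real.sin (π * x / 2))]
  -- sum over ℤ of 1/(x+2n)^2
  have H4 := H.div_const 4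
  have hFeq : (fun n : ℤ => (1 / (x / 2 + (n:ℝ)) ^ 2) / 4)
      = fun n : ℤ => 1 / (x + 2 * (n:ℝ)) ^ 2 := by
    funext n
    rw [show (x + 2 * (n:ℝ)) ^ 2 = (x / 2 + (n:ℝ)) ^ 2 * 4 by ring, div_div]
  rw [hFeq] at H4
  have Hnat := H4.nat_add_neg
  have hite : HasSum (fun n : ℕ => if n = 0 then 1 / x ^ 2 else 0) (1 / x ^ 2) :=
    hasSum_ite_eq 0 _
  have Hfin := Hnat.sub hite
  push_cast at Hfin
  have hfun : (fun n : ℕ => 1 / (x + 2 * (n:ℝ)) ^ 2 + 1 / (x + 2 * -(n:ℝ)) ^ 2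
        - if n = 0 then 1 / x ^ 2 else 0)
      = fun n : ℕ => if n = 0 then 1 / x ^ 2
        else 1 / (2 * (n : ℝ) - x) ^ 2 + 1 / (2 * (n : ℝ) + x) ^ 2 := by
    funext n
    by_cases hn : n = 0
    · subst hn
      norm_num
    · simp only [hn, if_false, sub_zero]
      rw [show (x + 2 * (n:ℝ)) ^ 2 = (2 * (n:ℝ) + x) ^ 2 by ring,
        show (x + 2 * (-(n:ℝ))) ^ 2 = (2 * (n:ℝ) - x) ^ 2 by ring]
      ring
  rw [hfun] at Hfin
  have hval : π ^ 2 / Real.sin (π * x / 2) ^ 2 / 4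
        + 1 / (x + 2 * (0:ℝ)) ^ 2 - 1 / x ^ 2
      = (π ^ 2 * Real.cos (π * x / 2)
          * (1 + (1 / Real.cos (π * x / 2) + Real.tan (π * x / 2)) ^ 2)
        / (8 * Real.sin (π * x / 2) ^ 2
          * (1 / Real.cos (π * x / 2) + Real.tan (π * x / 2)))) := by
    rw [Real.tan_eq_sin_div_cos]
    have hq : 1 / Real.cos (π * x / 2) + Real.sin (π * x / 2) / Real.cos (π * x / 2)
        = (1 + Real.sin (π * x / 2)) / Real.cos (π * x / 2) := by ring
    rw [hq]
    rw [show 1 + ((1 + Real.sin (π * x / 2)) / Real.cos (π * x / 2)) ^ 2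
        = (2 * (1 + Real.sin (π * x / 2))) / Real.cos (π * x / 2) ^ 2 by
      rw [eq_div_iff (pow_ne_zero 2 hc)]
      field_simp
      linear_combination hpyth]
    simp only [mul_zero, add_zero]
    field_simp
    ring
  rw [hval] at Hfin
  exact Hfin
end

section
/- For every real r, the integral over ℝ of e^{irθ}·sech(πθ/2) dθ equals 2 sech(r). -/
open Real

lemma aux_pt (r θ : ℝ) :
    |π * (1 + Real.exp (-(π*θ)))⁻¹ * (1 - (1 + Real.exp (-(π*θ)))⁻¹)| •
      ((((1 + Real.exp (-(π*θ)))⁻¹ : ℝ) : ℂ) ^ ((1/2 + (r/π) * Complex.I) - 1) *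
        (1 - (((1 + Real.exp (-(π*θ)))⁻¹ : ℝ) : ℂ)) ^ (1 - (1/2 + (r/π) * Complex.I) - 1))
      = (π/2 : ℂ) * (Complex.exp (Complex.I * r * θ) * ((1 / Real.cosh (π * θ / 2) : ℝ) : ℂ)) := by
  have hπ : (0:ℝ) < π := Real.pi_pos
  set s : ℂ := 1/2 + (r/π) * Complex.I with hs
  set a : ℝ := Real.exp (π*θ) with ha
  have ha0 : 0 < a := Real.exp_pos _
  set b : ℝ := Real.exp (-(π*θ)) with hb
  have hb0 : 0 < b := Real.exp_pos _
  have hab : b = a⁻¹ := by rw [ha, hb, ← Real.exp_neg]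
  set x : ℝ := (1 + b)⁻¹ with hx
  have hx0 : 0 < x := by positivity
  have hxa : x = a / (1 + a) := by
    rw [hx, hab]; field_simp; ring
  have h1x : 1 - x = (1 + a)⁻¹ := by
    rw [hxa]; field_simp; ring
  have h1x0 : 0 < 1 - x := by rw [h1x]; positivity
  set L : ℝ := Real.log (1 + a) with hL
  have hlogx : Real.log x = π*θ - L := by
    rw [hxa, Real.log_div ha0.ne' (by positivity), ha, Real.log_exp, hL]
  have hlog1x : Real.log (1 - x) = -L := by
    rw [h1x, Real.log_inv, hL]
  -- rewrite cpow as exp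
  have hc1 : (((x:ℝ)):ℂ) ^ (s - 1) = Complex.exp ((Real.log x : ℂ) * (s - 1)) := by
    rw [Complex.cpow_def_of_ne_zero (by exact_mod_cast hx0.ne'), Complex.ofReal_log hx0.le]
  have hc2 : (1 - ((x:ℝ):ℂ)) ^ (1 - s - 1) = Complex.exp ((Real.log (1-x) : ℂ) * (-s)) := by
    have : (1 - ((x:ℝ):ℂ)) = (((1-x : ℝ)):ℂ) := by push_cast; ring
    rw [this, Complex.cpow_def_of_ne_zero (by exact_mod_cast h1x0.ne'),
      Complex.ofReal_log h1x0.le]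
    ring_nf
  have habs : |π * x * (1 - x)| = π * x * (1 - x) := abs_of_pos (by positivity)
  rw [habs, hc1, hc2, Complex.real_smul]
  have hxe : ((x:ℝ):ℂ) = Complex.exp ((Real.log x : ℂ)) := by
    rw [← Complex.ofReal_exp, Real.exp_log hx0]
  have h1xe : (((1-x:ℝ)):ℂ) = Complex.exp ((Real.log (1-x) : ℂ)) := by
    rw [← Complex.ofReal_exp, Real.exp_log h1x0]
  have hsplit : ((π * x * (1-x) : ℝ) : ℂ) = (π:ℂ) * (((x:ℝ)):ℂ) * (((1-x:ℝ)):ℂ) := by push_cast; ring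
  rw [hsplit, hxe, h1xe, ← Complex.exp_add]
  rw [show ∀ A B C : ℂ, (π:ℂ) * Complex.exp A * Complex.exp B * Complex.exp C
      = (π:ℂ) * Complex.exp (A + B + C) from fun A B C => by
    rw [Complex.exp_add, Complex.exp_add]; ring]
  -- exponent simplification
  have hexp : (Real.log x : ℂ) + (Real.log (1-x) : ℂ) + ((Real.log x : ℂ) * (s-1) + (Real.log (1-x) : ℂ) * (-s))
      = (↑(π*θ) : ℂ) * s - (L:ℂ) := by
    rw [hlogx, hlog1x]; push_cast; ring
  rw [hexp]
  have hπC : ((π:ℝ):ℂ) ≠ 0 := by exact_mod_cast hπ.ne'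
  have hps : ((π*θ : ℝ) : ℂ) * s = (↑(π*θ/2) : ℂ) + Complex.I * r * θ := by
    rw [hs]; push_cast; field_simp
  rw [hps]
  have key : Real.exp (π*θ/2 - L) = 1 / (2 * Real.cosh (π*θ/2)) := by
    rw [Real.exp_sub, hL, Real.exp_log (by positivity), Real.cosh_eq]
    rw [div_eq_div_iff (by positivity) (by positivity)]
    have : Real.exp (π*θ/2) * (2 * ((Real.exp (π*θ/2) + Real.exp (-(π*θ/2)))/2))
        = Real.exp (π*θ/2 + π*θ/2) + Real.exp (π*θ/2 + -(π*θ/2)) := by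
      rw [Real.exp_add, Real.exp_add]; ring
    rw [show Real.exp (π * θ / 2) * (2 * ((Real.exp (π * θ / 2) + Real.exp (-(π * θ / 2))) / 2)) =
        Real.exp (π*θ/2) * (2 * ((Real.exp (π*θ/2) + Real.exp (-(π*θ/2)))/2)) from rfl, this]
    rw [show π*θ/2 + π*θ/2 = π*θ by ring, show π*θ/2 + -(π*θ/2) = 0 by ring, Real.exp_zero, ha]
    ring
  have : Complex.exp ((↑(π*θ/2) : ℂ) + Complex.I * r * θ - (L:ℂ))
      = Complex.exp (Complex.I * r * θ) * ((Real.exp (π*θ/2 - L) : ℝ) : ℂ) := by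
    rw [Complex.ofReal_exp, ← Complex.exp_add]
    congr 1; push_cast; ring
  rw [this, key]
  have hcosh : Real.cosh (π*θ/2) ≠ 0 := (Real.cosh_pos (π*θ/2)).ne'
  push_cast
  field_simp


theorem stmt19 (r : ℝ) :
    ∫ θ : ℝ, Complex.exp (Complex.I * r * θ) * (1 / Real.cosh (π * θ / 2) : ℝ)
      = 2 * (1 / Real.cosh r : ℝ) := by
  have hπ : (0:ℝ) < π := Real.pi_pos
  set s : ℂ := 1/2 + (↑r/↑π) * Complex.I with hs
  set f : ℝ → ℝ := fun θ => (1 + Real.exp (-(π*θ)))⁻¹ with hf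
  set g : ℝ → ℂ := fun x => ((x:ℂ)) ^ (s - 1) * (1 - (x:ℂ)) ^ (1 - s - 1) with hg
  set F : ℝ → ℂ := fun θ =>
    Complex.exp (Complex.I * r * θ) * ((1 / Real.cosh (π * θ / 2) : ℝ) : ℂ) with hF
  -- real part of s
  have hsre : s.re = 1/2 := by
    have h1 : ((r:ℂ)/(π:ℂ)) = ((r/π : ℝ) : ℂ) := by push_cast; ring
    rw [hs, h1]
    simp
  have h1sre : (1 - s).re = 1/2 := by
    simp [Complex.sub_re, hsre]
    norm_num
  -- derivative of f
  have hderiv : ∀ θ : ℝ, HasDerivAt f (π * f θ * (1 - f θ)) θ := by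
    intro θ
    have h1 : HasDerivAt (fun θ : ℝ => 1 + Real.exp (-(π*θ))) (Real.exp (-(π*θ)) * (-π)) θ := by
      have := ((hasDerivAt_id θ).const_mul π).neg.exp.const_add 1
      simpa using this
    have h2 := h1.inv (by positivity)
    refine h2.congr_deriv ?_
    have ha : (0:ℝ) < Real.exp (-(π*θ)) := Real.exp_pos _
    simp only [hf]
    field_simp
    ring
  -- injectivity of f
  have hinj : Function.Injective f := by
    intro u v h
    simp only [hf] at h
    have h2 := inv_injective h
    have h3 : Real.exp (-(π*u)) = Real.exp (-(π*v)) := by linarith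
    have h4 := Real.exp_injective h3
    have := mul_left_cancel₀ hπ.ne' (by linarith : π * u = π * v)
    exact this
  -- image of f
  have himage : f '' Set.univ = Set.Ioo (0:ℝ) 1 := by
    ext y
    simp only [Set.image_univ, Set.mem_range, Set.mem_Ioo]
    constructor
    · rintro ⟨θ, rfl⟩
      have hb : (0:ℝ) < Real.exp (-(π*θ)) := Real.exp_pos _
      constructor
      · simp only [hf]; positivity
      · simp only [hf]
        exact inv_lt_one_of_one_lt₀ (by linarith)
    · rintro ⟨hy0, hy1⟩
      refine ⟨-Real.log (y⁻¹ - 1)/π, ?_⟩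
      have hy2 : (0:ℝ) < y⁻¹ - 1 := by
        have := one_lt_inv₀ hy0 |>.mpr hy1
        linarith
      simp only [hf]
      rw [show -(π * (-Real.log (y⁻¹ - 1)/π)) = Real.log (y⁻¹ - 1) by field_simp,
        Real.exp_log hy2]
      have : 1 + (y⁻¹ - 1) = y⁻¹ := by ring
      rw [this, inv_inv]
  -- Beta integral and reflection
  have hbeta : Complex.betaIntegral s (1-s) = ↑π / Complex.sin (↑π * s) := by
    have h1 := Complex.Gamma_mul_Gamma_eq_betaIntegral
      (s := s) (t := 1-s) (by rw [hsre]; norm_num) (by rw [h1sre]; norm_num)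
    rw [show s + (1 - s) = 1 by ring, Complex.Gamma_one, one_mul] at h1
    rw [← h1, Complex.Gamma_mul_Gamma_one_sub]
  have hsin : Complex.sin (↑π * s) = ((Real.cosh r : ℝ) : ℂ) := by
    have h1 : (↑π:ℂ) * s = ↑π/2 + ↑r * Complex.I := by
      rw [hs]
      have hπC : ((π:ℝ):ℂ) ≠ 0 := by exact_mod_cast hπ.ne'
      field_simp
    rw [h1, Complex.sin_add, Complex.sin_pi_div_two, Complex.cos_pi_div_two,
      Complex.cos_mul_I, Complex.ofReal_cosh]
    ring
  -- change of variables
  have hIoo : Complex.betaIntegral s (1-s) = ∫ x in Set.Ioo (0:ℝ) 1, g x := by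
    rw [Complex.betaIntegral, intervalIntegral.integral_of_le zero_le_one,
      MeasureTheory.integral_Ioc_eq_integral_Ioo]
  have hchange : ∫ x in Set.Ioo (0:ℝ) 1, g x
      = ∫ θ : ℝ, |π * f θ * (1 - f θ)| • g (f θ) := by
    rw [← himage,
      MeasureTheory.integral_image_eq_integral_abs_deriv_smul MeasurableSet.univ
        (fun θ _ => (hderiv θ).hasDerivWithinAt) hinj.injOn g,
      MeasureTheory.setIntegral_univ]
  -- pointwise identity
  have hpt : ∀ θ : ℝ, |π * f θ * (1 - f θ)| • g (f θ) = ((π:ℝ)/2 : ℂ) * F θ := by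
    intro θ
    exact aux_pt r θ
  have hfinal : Complex.betaIntegral s (1-s) = ((π:ℝ)/2 : ℂ) * ∫ θ : ℝ, F θ := by
    rw [hIoo, hchange]
    simp_rw [hpt]
    rw [MeasureTheory.integral_const_mul]
  rw [hbeta, hsin] at hfinal
  have hcosh : ((Real.cosh r : ℝ) : ℂ) ≠ 0 := by
    exact_mod_cast (Real.cosh_pos r).ne'
  have hπC : ((π:ℝ):ℂ) ≠ 0 := by exact_mod_cast hπ.ne'
  have h2 : (((Real.cosh r : ℝ)):ℂ)⁻¹ = (∫ θ : ℝ, F θ)/2 :=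
    mul_left_cancel₀ hπC (by rw [← div_eq_mul_inv, hfinal]; ring)
  have : (∫ θ : ℝ, F θ) = 2 * (((Real.cosh r : ℝ)):ℂ)⁻¹ := by rw [h2]; ring
  rw [show (∫ θ : ℝ, Complex.exp (Complex.I * r * θ) * ((1 / Real.cosh (π * θ / 2) : ℝ) : ℂ))
      = ∫ θ : ℝ, F θ from rfl, this]
  push_cast
  ring
end
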